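/- arXiv:2104.06124 — 3 statements merged into one kernel-verified Lean document; each statement's English description precedes it below -/
import Mathlib

section
/- Let γ = μ + iσ with μ ∈ ℝ and σ > 0 and let X ∼ C(γ). Then log|X| is integrable and E[log|X|] = log|γ|. -/
open MeasureTheory ProbabilityTheory Filter

open Real Set intervalIntegral
open scoped Topology

noncomputable def cd (m s : ℝ) : ℝ → ℝ := fun x => s / (Real.pi * ((x - m) ^ 2 + s ^ 2))

section helpers
variable {m s : ℝ} (hs : 0 < s)

lemma denom_pos (hs : 0 < s) (x : ℝ) : 0 < (x - m) ^ 2 + s ^ 2 := by positivity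

include hs in
lemma cd_pos (x : ℝ) : 0 < cd m s x := by
  unfold cd
  have := denom_pos (m := m) hs x
  positivity

include hs in
lemma cd_nonneg (x : ℝ) : 0 ≤ cd m s x := (cd_pos hs x).le

include hs in
lemma cont_cd : Continuous (cd m s) := by
  apply continuous_const.div
  · fun_prop
  · intro x
    have h := denom_pos (m := m) hs x
    positivity

include hs in
lemma cd_le (x : ℝ) : cd m s x ≤ 1 / (Real.pi * s) := by
  unfold cd
  rw [div_le_div_iff₀ (by positivity) (by positivity)]
  have : s ^ 2 ≤ (x - m) ^ 2 + s ^ 2 := by nlinarith [sq_nonneg (x - m)]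
  nlinarith [Real.pi_pos, sq_nonneg (x-m), hs]

include hs in
lemma denom_lb : ∃ c > 0, ∀ x : ℝ, c * (1 + |x|) ^ 2 ≤ (x - m) ^ 2 + s ^ 2 := by
  refine ⟨min (s ^ 2 / (2 + 2 * |m|) ^ 2) (1/4), lt_min (by positivity) (by norm_num), fun x => ?_⟩
  rcases le_or_gt (|x|) (2 * |m| + 1) with h | h
  · calc min (s ^ 2 / (2 + 2 * |m|) ^ 2) (1/4) * (1 + |x|) ^ 2
        ≤ s ^ 2 / (2 + 2 * |m|) ^ 2 * (2 + 2 * |m|) ^ 2 := by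
          apply mul_le_mul (min_le_left _ _) _ (by positivity) (by positivity)
          have h1 : (0:ℝ) ≤ 1 + |x| := by positivity
          nlinarith [abs_nonneg x, abs_nonneg m]
      _ = s ^ 2 := by field_simp
      _ ≤ (x - m) ^ 2 + s ^ 2 := by nlinarith [sq_nonneg (x - m)]
  · have h1 : (1 + |x|) / 2 ≤ |x| - |m| := by linarith
    have h2 : |x| - |m| ≤ |x - m| := by
      have := abs_sub_abs_le_abs_sub x m
      linarith
    have h3 : ((1 + |x|)/2) ^ 2 ≤ (x - m) ^ 2 := by
      rw [← sq_abs (x - m)]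
      have h0 : (0:ℝ) ≤ (1 + |x|)/2 := by positivity
      nlinarith [abs_nonneg (x - m)]
    calc min (s ^ 2 / (2 + 2 * |m|) ^ 2) (1/4) * (1 + |x|) ^ 2
        ≤ 1/4 * (1 + |x|) ^ 2 := by
          apply mul_le_mul_of_nonneg_right (min_le_right _ _) (by positivity)
      _ ≤ (x - m) ^ 2 := by nlinarith
      _ ≤ (x - m) ^ 2 + s ^ 2 := by nlinarith [sq_nonneg s]

end helpers

lemma cont_log_comp {f : ℝ → ℝ} (hf : Continuous f) (hpos : ∀ x, 0 < f x) :
    Continuous fun x => Real.log (f x) :=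
  continuous_iff_continuousAt.2 fun x => (Real.continuousAt_log (hpos x).ne').comp hf.continuousAt

section integr
variable {m s : ℝ} (hs : 0 < s)

lemma int_japanese {r : ℝ} (hr : 1 < r) : Integrable (fun x : ℝ => (1 + |x|) ^ (-r)) := by
  have := integrable_one_add_norm (E := ℝ) (μ := volume) (r := r) (by simpa using hr)
  simpa [Real.norm_eq_abs] using this

include hs in
lemma cd_rpow_bound : ∃ C > 0, ∀ x : ℝ, cd m s x ≤ C * (1 + |x|) ^ (-(2:ℝ)) := by
  obtain ⟨c, hc, hcb⟩ := denom_lb (m := m) hs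
  refine ⟨s / (Real.pi * c), by positivity, fun x => ?_⟩
  have hx1 : (0:ℝ) < 1 + |x| := by positivity
  have h2 : (1 + |x|) ^ (-(2:ℝ)) = ((1 + |x|) ^ 2)⁻¹ := by
    rw [Real.rpow_neg hx1.le, Real.rpow_two]
  rw [h2]
  have hd := denom_pos (m := m) hs x
  have hb := hcb x
  have hR : s / (Real.pi * c) * ((1 + |x|) ^ 2)⁻¹ = s / (Real.pi * (c * (1 + |x|) ^ 2)) := by
    rw [div_eq_mul_inv, div_eq_mul_inv, mul_assoc, ← mul_inv, mul_assoc]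
  unfold cd
  rw [hR]
  apply div_le_div_of_nonneg_left hs.le (by positivity)
  have := mul_le_mul_of_nonneg_left hb Real.pi_pos.le
  linarith

include hs in
lemma hPint : Integrable (cd m s) := by
  obtain ⟨C, hC, hCb⟩ := cd_rpow_bound (m := m) hs
  apply Integrable.mono' ((int_japanese (r := 2) (by norm_num)).const_mul C)
    (cont_cd hs).aestronglyMeasurable
  filter_upwards with x
  rw [Real.norm_eq_abs, abs_of_nonneg (cd_nonneg hs x)]
  exact hCb x

lemma log1p_le (x : ℝ) : Real.log (1 + |x|) ≤ 2 * (1 + |x|) ^ ((1:ℝ)/2) := by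
  have hx1 : (0:ℝ) < 1 + |x| := by positivity
  have h1 : Real.log (1 + |x|) = 2 * Real.log ((1 + |x|) ^ ((1:ℝ)/2)) := by
    rw [Real.log_rpow hx1]; ring
  rw [h1]
  have h2 := Real.log_le_sub_one_of_pos (x := (1 + |x|) ^ ((1:ℝ)/2)) (by positivity)
  nlinarith [Real.rpow_nonneg hx1.le ((1:ℝ)/2)]

lemma cont_log1p : Continuous fun x : ℝ => Real.log (1 + |x|) :=
  cont_log_comp (by continuity) (fun x => by positivity)

include hs in
lemma hIlog1p : Integrable (fun x => Real.log (1 + |x|) * cd m s x) := by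
  obtain ⟨C, hC, hCb⟩ := cd_rpow_bound (m := m) hs
  apply Integrable.mono' ((int_japanese (r := 3/2) (by norm_num)).const_mul (2 * C))
    (cont_log1p.mul (cont_cd hs)).aestronglyMeasurable
  filter_upwards with x
  have hx1 : (0:ℝ) < 1 + |x| := by positivity
  have hlog : 0 ≤ Real.log (1 + |x|) := Real.log_nonneg (by simp [abs_nonneg])
  simp only [Pi.mul_apply]
  rw [Real.norm_eq_abs, abs_of_nonneg (mul_nonneg hlog (cd_nonneg hs x))]
  calc Real.log (1 + |x|) * cd m s x
      ≤ (2 * (1 + |x|) ^ ((1:ℝ)/2)) * (C * (1 + |x|) ^ (-(2:ℝ))) := by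
        apply mul_le_mul (log1p_le x) (hCb x) (cd_nonneg hs x) (by positivity)
    _ = 2 * C * ((1 + |x|) ^ ((1:ℝ)/2) * (1 + |x|) ^ (-(2:ℝ))) := by ring
    _ = 2 * C * (1 + |x|) ^ (-(3/2) : ℝ) := by
        rw [← Real.rpow_add hx1]; norm_num

include hs in
lemma hI2 {t : ℝ} (ht : 0 < t) : Integrable (fun x => Real.log (x ^ 2 + t ^ 2) * cd m s x) := by
  have hcont : Continuous fun x : ℝ => Real.log (x ^ 2 + t ^ 2) :=
    cont_log_comp (by continuity) (fun x => by positivity)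
  apply Integrable.mono'
    (((hIlog1p (m := m) hs).const_mul 2).add
      ((hPint (m := m) hs).const_mul (2 * Real.log (1 + t) + 2 * |Real.log t|)))
    (hcont.mul (cont_cd hs)).aestronglyMeasurable
  filter_upwards with x
  simp only [Pi.mul_apply, Pi.add_apply]
  rw [Real.norm_eq_abs, abs_mul, abs_of_nonneg (cd_nonneg hs x)]
  have key : |Real.log (x ^ 2 + t ^ 2)| ≤
      2 * Real.log (1 + |x|) + (2 * Real.log (1 + t) + 2 * |Real.log t|) := by
    have h1 : Real.log (x ^ 2 + t ^ 2) ≤ 2 * Real.log (1 + |x|) + 2 * Real.log (1 + t) := by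
      have hb : x ^ 2 + t ^ 2 ≤ ((1 + |x|) * (1 + t)) ^ 2 := by
        nlinarith [abs_nonneg x, sq_abs x, ht.le, mul_nonneg (abs_nonneg x) ht.le]
      calc Real.log (x ^ 2 + t ^ 2) ≤ Real.log (((1 + |x|) * (1 + t)) ^ 2) :=
            Real.log_le_log (by positivity) hb
        _ = 2 * Real.log ((1 + |x|) * (1 + t)) := by
            rw [Real.log_pow]; push_cast; ring
        _ = 2 * Real.log (1 + |x|) + 2 * Real.log (1 + t) := by
            rw [Real.log_mul (by positivity) (by positivity)]; ring
    have h2 : 2 * Real.log t ≤ Real.log (x ^ 2 + t ^ 2) := by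
      calc 2 * Real.log t = Real.log (t ^ 2) := by
            rw [Real.log_pow]; push_cast; ring
        _ ≤ Real.log (x ^ 2 + t ^ 2) := Real.log_le_log (by positivity) (by nlinarith [sq_nonneg x])
    have hl1 : 0 ≤ Real.log (1 + |x|) := Real.log_nonneg (by simp [abs_nonneg])
    have hl2 : 0 ≤ Real.log (1 + t) := Real.log_nonneg (by linarith)
    rcases abs_cases (Real.log (x ^ 2 + t ^ 2)) with ⟨he, _⟩ | ⟨he, _⟩ <;> rw [he]
    · have := abs_nonneg (Real.log t); linarith
    · have : -Real.log t ≤ |Real.log t| := neg_le_abs _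
      linarith
  calc |Real.log (x ^ 2 + t ^ 2)| * cd m s x
      ≤ (2 * Real.log (1 + |x|) + (2 * Real.log (1 + t) + 2 * |Real.log t|)) * cd m s x :=
        mul_le_mul_of_nonneg_right key (cd_nonneg hs x)
    _ = 2 * (Real.log (1 + |x|) * cd m s x) +
        (2 * Real.log (1 + t) + 2 * |Real.log t|) * cd m s x := by ring

end integr

section logabs
variable {m s : ℝ} (hs : 0 < s)

lemma intOn_abs_rpow : IntegrableOn (fun x : ℝ => |x| ^ (-(1:ℝ)/2)) (Icc (-1) 1) := by
  have base : IntegrableOn (fun x : ℝ => |x| ^ (-(1:ℝ)/2)) (Icc 0 1) := by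
    rw [integrableOn_Icc_iff_integrableOn_Ioc]
    apply ((intervalIntegrable_rpow' (a := 0) (b := 1) (by norm_num : (-1:ℝ) < -1/2)).1).congr_fun
      (fun x hx => ?_) measurableSet_Ioc
    rw [abs_of_pos hx.1]
  have hneg : IntegrableOn (fun x : ℝ => |x| ^ (-(1:ℝ)/2)) (Icc (-1) 0) := by
    rw [← (Measure.measurePreserving_neg (volume : Measure ℝ)).integrableOn_comp_preimage
        (Homeomorph.neg ℝ).measurableEmbedding]
    simpa [Function.comp_def, abs_neg] using base
  have : Icc (-1:ℝ) 1 = Icc (-1) 0 ∪ Ioc 0 1 := (Icc_union_Ioc_eq_Icc (by norm_num) (by norm_num)).symm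
  rw [this, integrableOn_union]
  exact ⟨hneg, base.mono_set Ioc_subset_Icc_self⟩

lemma logabs_le {x : ℝ} (hx : |x| ≤ 1) : abs (Real.log |x|) ≤ 2 * |x| ^ (-(1:ℝ)/2) := by
  rcases eq_or_ne x 0 with rfl | hx0
  · simp [Real.log_zero, Real.zero_rpow (by norm_num : (-(1:ℝ)/2) ≠ 0)]
  · have hxa : 0 < |x| := abs_pos.2 hx0
    have hlognp : Real.log |x| ≤ 0 := Real.log_nonpos hxa.le hx
    have hinv : (1:ℝ) ≤ |x|⁻¹ := one_le_inv_iff₀.2 ⟨hxa, hx⟩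
    have h1 : abs (Real.log |x|) = Real.log (|x|⁻¹) := by
      rw [Real.log_inv, abs_of_nonpos hlognp]
    have h2 : Real.log (|x|⁻¹) = 2 * Real.log ((|x|⁻¹) ^ ((1:ℝ)/2)) := by
      rw [Real.log_rpow (by positivity)]; ring
    have h3 : Real.log ((|x|⁻¹) ^ ((1:ℝ)/2)) ≤ (|x|⁻¹) ^ ((1:ℝ)/2) := by
      have := Real.log_le_sub_one_of_pos (x := (|x|⁻¹) ^ ((1:ℝ)/2)) (by positivity)
      nlinarith [Real.rpow_nonneg (by positivity : (0:ℝ) ≤ |x|⁻¹) ((1:ℝ)/2)]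
    have h4 : (|x|⁻¹) ^ ((1:ℝ)/2) = |x| ^ (-(1:ℝ)/2) := by
      rw [Real.inv_rpow (abs_nonneg x), ← Real.rpow_neg (abs_nonneg x)]
      norm_num
    rw [h1, h2, ← h4]
    linarith
  
include hs in
lemma hIlogabs : Integrable (fun x => Real.log |x| * cd m s x) := by
  have hmeas : AEStronglyMeasurable (fun x => Real.log |x| * cd m s x) volume := by
    apply Measurable.aestronglyMeasurable
    exact (Real.measurable_log.comp measurable_abs ).mul (cont_cd hs).measurable
  rw [← integrableOn_univ, ← union_compl_self (Icc (-1:ℝ) 1), integrableOn_union]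
  constructor
  · apply Integrable.mono' ((intOn_abs_rpow.const_mul (2 / (Real.pi * s))))
      hmeas.restrict
    filter_upwards [ae_restrict_mem measurableSet_Icc] with x hx
    rw [Real.norm_eq_abs, abs_mul, abs_of_nonneg (cd_nonneg hs x)]
    have h1 : |x| ≤ 1 := abs_le.2 ⟨hx.1, hx.2⟩
    calc abs (Real.log |x|) * cd m s x ≤ (2 * |x| ^ (-(1:ℝ)/2)) * (1 / (Real.pi * s)) := by
          apply mul_le_mul (logabs_le h1) (cd_le hs x) (cd_nonneg hs x) (by positivity)
      _ = 2 / (Real.pi * s) * |x| ^ (-(1:ℝ)/2) := by ring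
  · apply Integrable.mono' ((hIlog1p (m := m) hs).integrableOn) hmeas.restrict
    filter_upwards [ae_restrict_mem measurableSet_Icc.compl] with x hx
    rw [Real.norm_eq_abs, abs_mul, abs_of_nonneg (cd_nonneg hs x)]
    have h1 : 1 < |x| := by
      simp only [mem_compl_iff, mem_Icc, not_and_or, not_le] at hx
      rcases hx with h | h
      · rw [abs_of_neg (by linarith)]; linarith
      · rw [abs_of_pos (by linarith)]; linarith
    have h2 : abs (Real.log |x|) = Real.log |x| := abs_of_nonneg (Real.log_nonneg h1.le)
    apply mul_le_mul_of_nonneg_right _ (cd_nonneg hs x)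
    rw [h2]
    exact Real.log_le_log (by positivity) (by linarith)

end logabs

lemma tendsto_inv_atBot_zero' : Tendsto (fun x : ℝ => x⁻¹) atBot (𝓝 0) := by
  have h1 : Tendsto (fun x : ℝ => -x) atBot atTop := tendsto_neg_atBot_atTop
  have h2 : Tendsto (fun x : ℝ => (-x)⁻¹) atBot (𝓝 0) :=
    (tendsto_inv_atTop_zero (𝕜 := ℝ)).comp h1
  have h3 := h2.neg
  simpa [inv_neg] using h3

lemma ratio_tendsto (a b c : ℝ) {l : Filter ℝ} (h0 : Tendsto (fun x : ℝ => x⁻¹) l (𝓝 0))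
    (hne : ∀ᶠ x in l, x ≠ 0) :
    Tendsto (fun x => (x ^ 2 + a) / ((x - b) ^ 2 + c)) l (𝓝 1) := by
  have hx2 : Tendsto (fun x : ℝ => (x⁻¹) ^ 2) l (𝓝 0) := by
    simpa using h0.pow 2
  have hnum : Tendsto (fun x : ℝ => 1 + a * (x⁻¹) ^ 2) l (𝓝 1) := by
    simpa using tendsto_const_nhds.add (hx2.const_mul a)
  have hden : Tendsto (fun x : ℝ => (1 - b * x⁻¹) ^ 2 + c * (x⁻¹) ^ 2) l (𝓝 1) := by
    have h1 : Tendsto (fun x : ℝ => 1 - b * x⁻¹) l (𝓝 1) := by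
      simpa using tendsto_const_nhds.sub (h0.const_mul b)
    simpa using (h1.pow 2).add (hx2.const_mul c)
  have := hnum.div hden one_ne_zero
  rw [div_one] at this
  apply this.congr'
  filter_upwards [hne] with x hx
  simp only [Pi.div_apply]
  rcases eq_or_ne ((x - b) ^ 2 + c) 0 with h | h
  · have hld : (1 - b * x⁻¹) ^ 2 + c * (x⁻¹) ^ 2 = ((x - b) ^ 2 + c) * (x⁻¹) ^ 2 := by
      field_simp
    rw [hld, h, zero_mul, div_zero, div_zero]
  · field_simp
    try ring

lemma tendsto_arctan_affine_top {b c : ℝ} (hc : 0 < c) :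
    Tendsto (fun x : ℝ => Real.arctan ((x - b) / c)) atTop (𝓝 (Real.pi / 2)) := by
  have haff : Tendsto (fun x : ℝ => (x - b) / c) atTop atTop :=
    (tendsto_atTop_add_const_right atTop (-b) tendsto_id).atTop_div_const hc
  exact (Real.tendsto_arctan_atTop.comp haff).mono_right nhdsWithin_le_nhds

lemma tendsto_arctan_affine_bot {b c : ℝ} (hc : 0 < c) :
    Tendsto (fun x : ℝ => Real.arctan ((x - b) / c)) atBot (𝓝 (-(Real.pi / 2))) := by
  have haff : Tendsto (fun x : ℝ => (x - b) / c) atBot atBot :=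
    (tendsto_atBot_add_const_right atBot (-b) tendsto_id).atBot_div_const hc
  exact (Real.tendsto_arctan_atBot.comp haff).mono_right nhdsWithin_le_nhds

section intcd
variable {m s : ℝ} (hs : 0 < s)

include hs in
lemma hasDerivAt_arctan_affine (b : ℝ) (x : ℝ) :
    HasDerivAt (fun x => Real.arctan ((x - b) / s)) (1 / (1 + ((x - b) / s) ^ 2) * (1 / s)) x := by
  have h1 : HasDerivAt (fun x : ℝ => (x - b) / s) (1 / s) x := by
    simpa using ((hasDerivAt_id x).sub_const b).div_const s
  exact (Real.hasDerivAt_arctan ((x - b) / s)).comp x h1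

include hs in
lemma integral_cd : ∫ x, cd m s x = 1 := by
  have hderiv : ∀ x : ℝ, HasDerivAt (fun x => Real.arctan ((x - m) / s) / Real.pi)
      (cd m s x) x := by
    intro x
    have h := ((hasDerivAt_arctan_affine hs m x).div_const Real.pi)
    refine h.congr_deriv ?_
    symm
    unfold cd
    have hd := denom_pos (m := m) hs x
    field_simp
    ring
  have := integral_of_hasDerivAt_of_tendsto hderiv (hPint (m := m) hs)
    ((tendsto_arctan_affine_bot (b := m) hs).div_const Real.pi)
    ((tendsto_arctan_affine_top (b := m) hs).div_const Real.pi)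
  rw [this]
  field_simp
  ring
end intcd

section ratint
variable {m s : ℝ} (hs : 0 < s)

set_option maxHeartbeats 2000000 in
include hs in
lemma ratint {u : ℝ} (hu : 0 < u) (hne : m ^ 2 + (s - u) ^ 2 ≠ 0) :
    ∫ x, u / (x ^ 2 + u ^ 2) * cd m s x = (s + u) / (m ^ 2 + (s + u) ^ 2) := by
  set Δ : ℝ := (m ^ 2 + (s - u) ^ 2) * (m ^ 2 + (s + u) ^ 2) with hΔdef
  have hΔ : Δ ≠ 0 := mul_ne_zero hne (by positivity)
  set A : ℝ := 2 * m * u * s / (Real.pi * Δ) with hA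
  set B : ℝ := u * s * (m ^ 2 + s ^ 2 - u ^ 2) / (Real.pi * Δ) with hB
  set E : ℝ := u * s * (m ^ 2 + u ^ 2 - s ^ 2) / (Real.pi * Δ) with hE
  have hderiv : ∀ x, HasDerivAt (fun x => A / 2 *
      (Real.log (x ^ 2 + u ^ 2) - Real.log ((x - m) ^ 2 + s ^ 2))
      + (B / u) * Real.arctan (x / u) + (E / s) * Real.arctan ((x - m) / s))
      (u / (x ^ 2 + u ^ 2) * cd m s x) x := by
    intro x
    have hp1 : (0:ℝ) < x ^ 2 + u ^ 2 := by positivity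
    have hp2 : (0:ℝ) < (x - m) ^ 2 + s ^ 2 := denom_pos hs x
    have hL1 : HasDerivAt (fun x : ℝ => Real.log (x ^ 2 + u ^ 2))
        ((x ^ 2 + u ^ 2)⁻¹ * (2 * x)) x := by
      have h1 : HasDerivAt (fun x : ℝ => x ^ 2 + u ^ 2) (2 * x) x := by
        simpa using (hasDerivAt_pow 2 x).add_const (u ^ 2)
      exact (Real.hasDerivAt_log hp1.ne').comp x h1
    have hL2 : HasDerivAt (fun x : ℝ => Real.log ((x - m) ^ 2 + s ^ 2))
        (((x - m) ^ 2 + s ^ 2)⁻¹ * (2 * (x - m))) x := by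
      have h1 : HasDerivAt (fun x : ℝ => (x - m) ^ 2 + s ^ 2) (2 * (x - m)) x := by
        have := (((hasDerivAt_id x).sub_const m).pow 2).add_const (s ^ 2)
        simpa using this
      exact (Real.hasDerivAt_log hp2.ne').comp x h1
    have hG1 : HasDerivAt (fun x : ℝ => Real.arctan (x / u))
        (1 / (1 + (x / u) ^ 2) * (1 / u)) x := by
      have h1 : HasDerivAt (fun x : ℝ => x / u) (1 / u) x := by
        simpa using (hasDerivAt_id x).div_const u
      exact (Real.hasDerivAt_arctan (x / u)).comp x h1
    have hG2 := hasDerivAt_arctan_affine (s := s) hs m x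
    have H := (((hL1.sub hL2).const_mul (A / 2)).add (hG1.const_mul (B / u))).add
      (hG2.const_mul (E / s))
    refine H.congr_deriv ?_
    symm
    rw [hA, hB, hE, hΔdef]
    unfold cd
    have hpi := Real.pi_ne_zero
    field_simp
    ring
  have hint : Integrable (fun x => u / (x ^ 2 + u ^ 2) * cd m s x) := by
    apply Integrable.mono' ((hPint (m := m) hs).const_mul (1 / u))
    · apply Continuous.aestronglyMeasurable
      exact (continuous_const.div (by continuity) (fun x => by positivity)).mul (cont_cd hs)
    · filter_upwards with x
      rw [Real.norm_eq_abs, abs_mul, abs_of_nonneg (cd_nonneg hs x),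
        abs_of_nonneg (by positivity : (0:ℝ) ≤ u / (x ^ 2 + u ^ 2))]
      apply mul_le_mul_of_nonneg_right _ (cd_nonneg hs x)
      rw [div_le_div_iff₀ (by positivity) (by positivity)]
      nlinarith [sq_nonneg x]
  have hlog_top : Tendsto (fun x : ℝ =>
      Real.log (x ^ 2 + u ^ 2) - Real.log ((x - m) ^ 2 + s ^ 2)) atTop (𝓝 0) := by
    have hr := ratio_tendsto (u ^ 2) m (s ^ 2) (tendsto_inv_atTop_zero (𝕜 := ℝ))
      ((eventually_gt_atTop 0).mono fun x hx => hx.ne')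
    have hl := (Real.continuousAt_log one_ne_zero).tendsto.comp hr
    rw [Real.log_one] at hl
    apply hl.congr
    intro x
    have hp1 : (0:ℝ) < x ^ 2 + u ^ 2 := by positivity
    have hp2 : (0:ℝ) < (x - m) ^ 2 + s ^ 2 := denom_pos hs x
    simp only [Function.comp_apply]
    rw [Real.log_div hp1.ne' hp2.ne']
  have hlog_bot : Tendsto (fun x : ℝ =>
      Real.log (x ^ 2 + u ^ 2) - Real.log ((x - m) ^ 2 + s ^ 2)) atBot (𝓝 0) := by
    have hr := ratio_tendsto (u ^ 2) m (s ^ 2) tendsto_inv_atBot_zero'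
      ((eventually_lt_atBot 0).mono fun x hx => hx.ne)
    have hl := (Real.continuousAt_log one_ne_zero).tendsto.comp hr
    rw [Real.log_one] at hl
    apply hl.congr
    intro x
    have hp1 : (0:ℝ) < x ^ 2 + u ^ 2 := by positivity
    have hp2 : (0:ℝ) < (x - m) ^ 2 + s ^ 2 := denom_pos hs x
    simp only [Function.comp_apply]
    rw [Real.log_div hp1.ne' hp2.ne']
  have harct1_top : Tendsto (fun x : ℝ => Real.arctan (x / u)) atTop (𝓝 (Real.pi / 2)) := by
    have := tendsto_arctan_affine_top (b := 0) hu
    simpa using this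
  have harct1_bot : Tendsto (fun x : ℝ => Real.arctan (x / u)) atBot (𝓝 (-(Real.pi / 2))) := by
    have := tendsto_arctan_affine_bot (b := 0) hu
    simpa using this
  have htop : Tendsto (fun x => A / 2 *
      (Real.log (x ^ 2 + u ^ 2) - Real.log ((x - m) ^ 2 + s ^ 2))
      + (B / u) * Real.arctan (x / u) + (E / s) * Real.arctan ((x - m) / s)) atTop
      (𝓝 (A / 2 * 0 + (B / u) * (Real.pi / 2) + (E / s) * (Real.pi / 2))) :=
    ((hlog_top.const_mul (A / 2)).add (harct1_top.const_mul (B / u))).add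
      ((tendsto_arctan_affine_top (b := m) hs).const_mul (E / s))
  have hbot : Tendsto (fun x => A / 2 *
      (Real.log (x ^ 2 + u ^ 2) - Real.log ((x - m) ^ 2 + s ^ 2))
      + (B / u) * Real.arctan (x / u) + (E / s) * Real.arctan ((x - m) / s)) atBot
      (𝓝 (A / 2 * 0 + (B / u) * (-(Real.pi / 2)) + (E / s) * (-(Real.pi / 2)))) :=
    ((hlog_bot.const_mul (A / 2)).add (harct1_bot.const_mul (B / u))).add
      ((tendsto_arctan_affine_bot (b := m) hs).const_mul (E / s))
  rw [integral_of_hasDerivAt_of_tendsto hderiv hint hbot htop]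
  rw [hB, hE, hΔdef]
  have hp3 : (0:ℝ) < m ^ 2 + (s + u) ^ 2 := by positivity
  have hpi := Real.pi_ne_zero
  field_simp
  ring

end ratint

lemma inner_int {x t : ℝ} (hx : x ≠ 0) (ht : 0 ≤ t) :
    ∫ u in Ioc 0 t, u / (x ^ 2 + u ^ 2) =
      1 / 2 * Real.log (x ^ 2 + t ^ 2) - Real.log |x| := by
  have hx2 : (0:ℝ) < x ^ 2 := by positivity
  have hderiv : ∀ u ∈ uIcc (0:ℝ) t,
      HasDerivAt (fun u => 1 / 2 * Real.log (x ^ 2 + u ^ 2)) (u / (x ^ 2 + u ^ 2)) u := by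
    intro u _
    have hp : (0:ℝ) < x ^ 2 + u ^ 2 := by positivity
    have h1 : HasDerivAt (fun u : ℝ => x ^ 2 + u ^ 2) (2 * u) u := by
      simpa using ((hasDerivAt_pow 2 u).const_add (x ^ 2))
    have h2 := ((Real.hasDerivAt_log hp.ne').comp u h1).const_mul (1 / 2)
    refine h2.congr_deriv ?_
    symm
    field_simp
  have hcont : IntervalIntegrable (fun u : ℝ => u / (x ^ 2 + u ^ 2)) volume 0 t := by
    apply Continuous.intervalIntegrable
    exact continuous_id.div (by continuity) (fun u => by positivity)
  have := intervalIntegral.integral_eq_sub_of_hasDerivAt hderiv hcont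
  rw [← intervalIntegral.integral_of_le ht, this]
  have hlog0 : Real.log (x ^ 2 + 0 ^ 2) = 2 * Real.log |x| := by
    rw [show x ^ 2 + 0 ^ 2 = |x| ^ 2 by rw [sq_abs]; ring, Real.log_pow]
    push_cast; ring
  rw [hlog0]
  ring

lemma outer_int {m s t : ℝ} (hs : 0 < s) (ht : 0 ≤ t) :
    ∫ u in Ioc 0 t, (s + u) / (m ^ 2 + (s + u) ^ 2) =
      1 / 2 * Real.log (m ^ 2 + (s + t) ^ 2) - 1 / 2 * Real.log (m ^ 2 + s ^ 2) := by
  have hderiv : ∀ u ∈ uIcc (0:ℝ) t,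
      HasDerivAt (fun u => 1 / 2 * Real.log (m ^ 2 + (s + u) ^ 2))
        ((s + u) / (m ^ 2 + (s + u) ^ 2)) u := by
    intro u hu
    have hu0 : 0 ≤ u := by
      rw [uIcc_of_le ht] at hu
      exact hu.1
    have hp : (0:ℝ) < m ^ 2 + (s + u) ^ 2 := by positivity
    have h1 : HasDerivAt (fun u : ℝ => m ^ 2 + (s + u) ^ 2) (2 * (s + u)) u := by
      have := ((((hasDerivAt_id u).const_add s).pow 2).const_add (m ^ 2))
      simpa using this
    have h2 := ((Real.hasDerivAt_log hp.ne').comp u h1).const_mul (1 / 2)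
    refine h2.congr_deriv ?_
    symm
    field_simp
  have hcont : IntervalIntegrable (fun u : ℝ => (s + u) / (m ^ 2 + (s + u) ^ 2)) volume 0 t := by
    apply ContinuousOn.intervalIntegrable
    apply ContinuousOn.div (by fun_prop) (by fun_prop)
    intro u hu
    have hu0 : 0 ≤ u := by
      rw [uIcc_of_le ht] at hu
      exact hu.1
    positivity
  have := intervalIntegral.integral_eq_sub_of_hasDerivAt hderiv hcont
  rw [← intervalIntegral.integral_of_le ht, this]
  ring_nf

section fubini
variable {m s : ℝ} (hs : 0 < s)

lemma ae_ne_zero : ∀ᵐ x : ℝ ∂volume, x ≠ 0 := by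
  rw [ae_iff]
  have h : {x : ℝ | ¬ x ≠ 0} = {0} := by ext x; simp
  rw [h]
  exact measure_singleton 0

include hs in
lemma key_identity {t : ℝ} (ht : 0 < t) :
    ∫ x, (1 / 2 * Real.log (x ^ 2 + t ^ 2) - Real.log |x|) * cd m s x =
      1 / 2 * Real.log (m ^ 2 + (s + t) ^ 2) - 1 / 2 * Real.log (m ^ 2 + s ^ 2) := by
  set ν := volume.restrict (Ioc (0:ℝ) t) with hν
  set f : ℝ → ℝ → ℝ := fun x u => u / (x ^ 2 + u ^ 2) * cd m s x with hf
  have hmeasf : AEStronglyMeasurable (Function.uncurry f) (volume.prod ν) := by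
    apply Measurable.aestronglyMeasurable
    exact (measurable_snd.div ((measurable_fst.pow_const 2).add
      (measurable_snd.pow_const 2))).mul ((cont_cd hs).measurable.comp measurable_fst)
  have hxint : ∀ᵐ x : ℝ ∂volume, Integrable (fun u => f x u) ν := by
    filter_upwards [ae_ne_zero] with x hx
    have hx2 : 0 < x ^ 2 := by
      rcases hx.lt_or_gt with h | h
      · nlinarith
      · nlinarith
    apply Continuous.integrableOn_Ioc
    apply Continuous.mul _ continuous_const
    exact continuous_id.div (by continuity) (fun u => by nlinarith [sq_nonneg u])
  have hinner : ∀ᵐ x : ℝ ∂volume,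
      (∫ u, f x u ∂ν) = (1 / 2 * Real.log (x ^ 2 + t ^ 2) - Real.log |x|) * cd m s x := by
    filter_upwards [ae_ne_zero] with x hx
    rw [hf]
    simp only
    rw [MeasureTheory.integral_mul_const, hν, inner_int hx ht.le]
  have hnorm : ∀ᵐ x : ℝ ∂volume, (∫ u, ‖f x u‖ ∂ν) = ∫ u, f x u ∂ν := by
    filter_upwards with x
    apply MeasureTheory.integral_congr_ae
    filter_upwards [ae_restrict_mem measurableSet_Ioc] with u hu
    rw [Real.norm_eq_abs, abs_of_nonneg]
    apply mul_nonneg _ (cd_nonneg hs x)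
    have h1 : 0 < u := hu.1
    positivity
  have hGint : Integrable
      (fun x => (1 / 2 * Real.log (x ^ 2 + t ^ 2) - Real.log |x|) * cd m s x) volume := by
    apply (((hI2 (m := m) hs ht).const_mul (1/2)).sub (hIlogabs (m := m) hs)).congr
    filter_upwards with x
    simp only [Pi.sub_apply]
    ring
  have hprod : Integrable (Function.uncurry f) (volume.prod ν) := by
    refine (integrable_prod_iff hmeasf).2 ⟨hxint, ?_⟩
    apply hGint.congr
    filter_upwards [hinner, hnorm] with x h1 h2
    simp only [Function.uncurry_apply_pair]
    rw [h2, h1]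
  have aene : ∀ᵐ u ∂ν, m ^ 2 + (s - u) ^ 2 ≠ 0 := by
    apply ae_restrict_of_ae
    rw [ae_iff]
    refine measure_mono_null ?_ (measure_singleton s)
    intro u hu
    simp only [mem_setOf_eq, not_not] at hu
    have h1 : (s - u) ^ 2 = 0 := by nlinarith [sq_nonneg m, sq_nonneg (s - u)]
    have h2 : s - u = 0 := sq_eq_zero_iff.1 h1
    simp only [mem_singleton_iff]
    linarith
  calc ∫ x, (1 / 2 * Real.log (x ^ 2 + t ^ 2) - Real.log |x|) * cd m s x
      = ∫ x, ∫ u, f x u ∂ν := (integral_congr_ae hinner).symm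
    _ = ∫ u, (∫ x, f x u) ∂ν := by exact integral_integral_swap hprod
    _ = ∫ u in Ioc 0 t, (s + u) / (m ^ 2 + (s + u) ^ 2) := by
        rw [hν]
        apply MeasureTheory.integral_congr_ae
        filter_upwards [ae_restrict_mem measurableSet_Ioc, aene] with u hu hne
        exact ratint (m := m) hs hu.1 hne
    _ = 1 / 2 * Real.log (m ^ 2 + (s + t) ^ 2) - 1 / 2 * Real.log (m ^ 2 + s ^ 2) :=
        outer_int hs ht.le

end fubini

section mainlim
variable {m s : ℝ} (hs : 0 < s)

include hs in
lemma cauchy_log_int : ∫ x, Real.log |x| * cd m s x = 1 / 2 * Real.log (m ^ 2 + s ^ 2) := by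
  set Ev := ∫ x, Real.log |x| * cd m s x with hEv
  have claim1 : ∀ t : ℝ, 1 ≤ t →
      (∫ x, (1 / 2 * Real.log ((x ^ 2 + t ^ 2) / (m ^ 2 + (s + t) ^ 2))) * cd m s x)
        = Ev - 1 / 2 * Real.log (m ^ 2 + s ^ 2) := by
    intro t ht1
    have ht : (0:ℝ) < t := lt_of_lt_of_le one_pos ht1
    have hd : (0:ℝ) < m ^ 2 + (s + t) ^ 2 := by positivity
    have hGint : Integrable
        (fun x => (1 / 2 * Real.log (x ^ 2 + t ^ 2) - Real.log |x|) * cd m s x) volume := by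
      apply (((hI2 (m := m) hs ht).const_mul (1/2)).sub (hIlogabs (m := m) hs)).congr
      filter_upwards with x
      simp only [Pi.sub_apply]
      ring
    have hconst : Integrable
        (fun x => (1 / 2 * Real.log (m ^ 2 + (s + t) ^ 2)) * cd m s x) volume :=
      (hPint (m := m) hs).const_mul _
    have hsplit : (fun x => (1 / 2 * Real.log ((x ^ 2 + t ^ 2) / (m ^ 2 + (s + t) ^ 2))) * cd m s x)
        = fun x => (((1 / 2 * Real.log (x ^ 2 + t ^ 2) - Real.log |x|) * cd m s x)
            + (Real.log |x| * cd m s x))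
            - (1 / 2 * Real.log (m ^ 2 + (s + t) ^ 2)) * cd m s x := by
      funext x
      have hp1 : (0:ℝ) < x ^ 2 + t ^ 2 := by positivity
      rw [Real.log_div hp1.ne' hd.ne']
      ring
    have hadd : Integrable (fun x => ((1 / 2 * Real.log (x ^ 2 + t ^ 2) - Real.log |x|) * cd m s x)
        + (Real.log |x| * cd m s x)) volume := hGint.add (hIlogabs (m := m) hs)
    rw [hsplit, MeasureTheory.integral_sub hadd hconst,
      MeasureTheory.integral_add hGint (hIlogabs (m := m) hs), key_identity hs ht,
      MeasureTheory.integral_const_mul, integral_cd hs, mul_one, ← hEv]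
    ring
  have claim2 : Tendsto
      (fun t : ℝ => ∫ x, (1 / 2 * Real.log ((x ^ 2 + t ^ 2) / (m ^ 2 + (s + t) ^ 2))) * cd m s x)
      atTop (𝓝 (∫ x : ℝ, (0:ℝ))) := by
    apply MeasureTheory.tendsto_integral_filter_of_dominated_convergence
      (bound := fun x => (Real.log (1 + |x|) + Real.log (1 + |m| + s)) * cd m s x)
    · filter_upwards [eventually_ge_atTop (1:ℝ)] with t ht1
      apply Continuous.aestronglyMeasurable
      have ht : (0:ℝ) < t := lt_of_lt_of_le one_pos ht1
      apply Continuous.mul _ (cont_cd hs)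
      apply Continuous.mul continuous_const
      apply cont_log_comp
      · apply Continuous.div (by continuity) continuous_const (fun _ => by positivity)
      · intro x
        positivity
    · filter_upwards [eventually_ge_atTop (1:ℝ)] with t ht1
      filter_upwards with x
      have ht : (0:ℝ) < t := lt_of_lt_of_le one_pos ht1
      have hd : (0:ℝ) < m ^ 2 + (s + t) ^ 2 := by positivity
      have hp1 : (0:ℝ) < x ^ 2 + t ^ 2 := by positivity
      have hr : (0:ℝ) < (x ^ 2 + t ^ 2) / (m ^ 2 + (s + t) ^ 2) := by positivity
      set r := (x ^ 2 + t ^ 2) / (m ^ 2 + (s + t) ^ 2) with hrdef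
      have hub : r ≤ 1 + x ^ 2 := by
        rw [hrdef, div_le_iff₀ hd]
        have h1 : x ^ 2 + t ^ 2 ≤ (1 + x ^ 2) * t ^ 2 := by
          nlinarith [sq_nonneg x, mul_le_mul_of_nonneg_left
            (by nlinarith : (1:ℝ) ≤ t ^ 2) (sq_nonneg x)]
        have h2 : (1 + x ^ 2) * t ^ 2 ≤ (1 + x ^ 2) * (m ^ 2 + (s + t) ^ 2) := by
          have : t ^ 2 ≤ m ^ 2 + (s + t) ^ 2 := by nlinarith [sq_nonneg m]
          nlinarith [sq_nonneg x]
        linarith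
      have hlb : 1 / (1 + |m| + s) ^ 2 ≤ r := by
        rw [hrdef, div_le_div_iff₀ (by positivity) hd]
        have h5 : m ^ 2 + (s + t) ^ 2 ≤ (|m| + s + t) ^ 2 := by
          nlinarith [abs_nonneg m, sq_abs m, hs.le, ht.le]
        have h6 : (|m| + s + t) ^ 2 ≤ t ^ 2 * (1 + |m| + s) ^ 2 := by
          have h7 : |m| + s + t ≤ t * (1 + |m| + s) := by nlinarith [abs_nonneg m, hs.le]
          nlinarith [abs_nonneg m, hs.le, ht.le, h7]
        have h8 : t ^ 2 ≤ x ^ 2 + t ^ 2 := by nlinarith [sq_nonneg x]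
        nlinarith [sq_nonneg (1 + |m| + s), mul_le_mul_of_nonneg_right h8
          (by positivity : (0:ℝ) ≤ (1 + |m| + s) ^ 2)]
      have hlog1 : (0:ℝ) ≤ Real.log (1 + |x|) := Real.log_nonneg (by simp [abs_nonneg])
      have hlog2 : (0:ℝ) ≤ Real.log (1 + |m| + s) := Real.log_nonneg (by
        have := abs_nonneg m; linarith)
      have hkey : abs (1 / 2 * Real.log r) ≤ Real.log (1 + |x|) + Real.log (1 + |m| + s) := by
        rcases le_or_gt 1 r with h | h
        · have hlr : 0 ≤ Real.log r := Real.log_nonneg h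
          rw [abs_of_nonneg (by linarith)]
          have h9 : Real.log r ≤ Real.log ((1 + |x|) ^ 2) := by
            apply Real.log_le_log hr
            have : 1 + x ^ 2 ≤ (1 + |x|) ^ 2 := by nlinarith [abs_nonneg x, sq_abs x]
            linarith
          rw [Real.log_pow] at h9
          push_cast at h9
          linarith
        · have hlr : Real.log r < 0 := Real.log_neg hr h
          rw [abs_of_nonpos (by linarith)]
          have h10 : Real.log ((1 / (1 + |m| + s) ^ 2)) ≤ Real.log r :=
            Real.log_le_log (by positivity) hlb
          rw [Real.log_div one_ne_zero (by positivity), Real.log_one, Real.log_pow] at h10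
          push_cast at h10
          linarith
      rw [Real.norm_eq_abs, abs_mul, abs_of_nonneg (cd_nonneg hs x)]
      exact mul_le_mul_of_nonneg_right hkey (cd_nonneg hs x)
    · apply (((hIlog1p (m := m) hs)).add ((hPint (m := m) hs).const_mul
        (Real.log (1 + |m| + s)))).congr
      filter_upwards with x
      simp only [Pi.add_apply]
      ring
    · filter_upwards with x
      have hrt : Tendsto (fun t : ℝ => (x ^ 2 + t ^ 2) / (m ^ 2 + (s + t) ^ 2)) atTop (𝓝 1) := by
        have := ratio_tendsto (x ^ 2) (-s) (m ^ 2) (tendsto_inv_atTop_zero (𝕜 := ℝ))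
          ((eventually_gt_atTop 0).mono fun t htp => htp.ne')
        apply this.congr
        intro t
        ring_nf
      have hlogt := (Real.continuousAt_log one_ne_zero).tendsto.comp hrt
      rw [Real.log_one] at hlogt
      have := (hlogt.const_mul (1/2:ℝ)).mul_const (cd m s x)
      simpa using this
  rw [MeasureTheory.integral_zero] at claim2
  have claim3 : Tendsto
      (fun t : ℝ => ∫ x, (1 / 2 * Real.log ((x ^ 2 + t ^ 2) / (m ^ 2 + (s + t) ^ 2))) * cd m s x)
      atTop (𝓝 (Ev - 1 / 2 * Real.log (m ^ 2 + s ^ 2))) := by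
    apply Tendsto.congr' _ (tendsto_const_nhds (α := ℝ) (f := atTop))
    filter_upwards [eventually_ge_atTop (1:ℝ)] with t ht1
    exact (claim1 t ht1).symm
  have := tendsto_nhds_unique claim2 claim3
  linarith [this]

end mainlim

/-- The Cauchy distribution `C(μ, σ)` on `ℝ`. -/
noncomputable def cauchyMeasure (μ σ : ℝ) : Measure ℝ :=
  MeasureTheory.volume.withDensity fun x =>
    ENNReal.ofReal (σ / (Real.pi * ((x - μ) ^ 2 + σ ^ 2)))

/-- If `X ∼ C(γ)` with `γ = μ + iσ`, `σ > 0`, then `log |X|` is integrable and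
`E[log |X|] = log |γ|`. -/
theorem log_abs_moment
    {Ω : Type*} [MeasurableSpace Ω] (P : Measure Ω) [IsProbabilityMeasure P]
    (γ : ℂ) (hγ : 0 < γ.im)
    (X : Ω → ℝ) (hX : Measurable X)
    (hlaw : Measure.map X P = cauchyMeasure γ.re γ.im) :
    Integrable (fun ω => Real.log |X ω|) P ∧
      ∫ ω, Real.log |X ω| ∂P = Real.log ‖γ‖ := by
  have hmeas_g : Measurable fun x : ℝ => Real.log |x| :=
    Real.measurable_log.comp measurable_abs
  have hcd_eq : (fun x : ℝ => ENNReal.ofReal (γ.im / (Real.pi * ((x - γ.re) ^ 2 + γ.im ^ 2))))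
      = fun x => ENNReal.ofReal (cd γ.re γ.im x) := rfl
  have hcm : cauchyMeasure γ.re γ.im
      = MeasureTheory.volume.withDensity fun x => ENNReal.ofReal (cd γ.re γ.im x) := by
    rw [_root_.cauchyMeasure, hcd_eq]
  have hdens_meas : Measurable fun x : ℝ => ENNReal.ofReal (cd γ.re γ.im x) :=
    ENNReal.measurable_ofReal.comp (cont_cd hγ).measurable
  have hint_cauchy : Integrable (fun x => Real.log |x|) (cauchyMeasure γ.re γ.im) := by
    rw [hcm, integrable_withDensity_iff hdens_meas
      (ae_of_all _ fun x => ENNReal.ofReal_lt_top)]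
    apply (hIlogabs hγ).congr
    filter_upwards with x
    rw [ENNReal.toReal_ofReal (cd_nonneg hγ x)]
  have h1 : Integrable (fun x => Real.log |x|) (Measure.map X P) := hlaw ▸ hint_cauchy
  have hint_Ω : Integrable (fun ω => Real.log |X ω|) P :=
    (integrable_map_measure hmeas_g.aestronglyMeasurable hX.aemeasurable).1 h1
  refine ⟨hint_Ω, ?_⟩
  have hf_meas : Measurable fun x : ℝ => Real.toNNReal (cd γ.re γ.im x) :=
    (cont_cd hγ).measurable.real_toNNReal
  have hsmul := integral_withDensity_eq_integral_smul (μ := volume) hf_meas (fun x : ℝ => Real.log |x|)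
  calc ∫ ω, Real.log |X ω| ∂P
      = ∫ x, Real.log |x| ∂(Measure.map X P) :=
        (integral_map hX.aemeasurable hmeas_g.aestronglyMeasurable).symm
    _ = ∫ x, Real.log |x| ∂(MeasureTheory.volume.withDensity
          fun x => ENNReal.ofReal (cd γ.re γ.im x)) := by rw [hlaw, hcm]
    _ = ∫ x, Real.toNNReal (cd γ.re γ.im x) • Real.log |x| := by
        rw [← hsmul]
        rfl
    _ = ∫ x, Real.log |x| * cd γ.re γ.im x := by
        apply MeasureTheory.integral_congr_ae
        filter_upwards with x
        rw [NNReal.smul_def, Real.coe_toNNReal _ (cd_nonneg hγ x), smul_eq_mul]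
        ring
    _ = 1 / 2 * Real.log (γ.re ^ 2 + γ.im ^ 2) := cauchy_log_int hγ
    _ = Real.log ‖γ‖ := by
        rw [Complex.norm_def, Complex.normSq_apply,
          show γ.re * γ.re + γ.im * γ.im = γ.re ^ 2 + γ.im ^ 2 by ring,
          Real.log_sqrt (by positivity)]
        ring
end

section
/- Let X_1, X_2, … and Y be complex random variables, m ∈ ℂ, and let (b_n) be positive reals with b_n → ∞ such that b_n·(X_n − m) → Y in law as n → ∞. Let f : ℂ → ℂ be measurable and complex differentiable on an open set containing m. Then b_n·(f(X_n) − f(m)) → f'(m)·Y in law as n → ∞. -/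
open MeasureTheory ProbabilityTheory Filter


noncomputable def cutoffFn (K : ℝ) : BoundedContinuousFunction ℂ ℝ :=
  BoundedContinuousFunction.mkOfBound
    ⟨fun x => max 0 (min 1 (‖x‖ - (K - 1))), by
      apply Continuous.max continuous_const
      exact Continuous.min continuous_const (continuous_norm.sub continuous_const)⟩ 1 (by
      intro x y
      simp only [ContinuousMap.coe_mk]
      rw [Real.dist_eq]
      have h2 : max 0 (min 1 (‖x‖ - (K-1))) ≤ 1 := max_le zero_le_one (min_le_left _ _)
      have h4 : max 0 (min 1 (‖y‖ - (K-1))) ≤ 1 := max_le zero_le_one (min_le_left _ _)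
      have h1 : (0:ℝ) ≤ max 0 (min 1 (‖x‖ - (K-1))) := le_max_left _ _
      have h3 : (0:ℝ) ≤ max 0 (min 1 (‖y‖ - (K-1))) := le_max_left _ _
      rw [abs_le]; constructor <;> linarith)

lemma cutoffFn_apply (K : ℝ) (x : ℂ) : cutoffFn K x = max 0 (min 1 (‖x‖ - (K - 1))) := rfl

lemma cutoffFn_nonneg (K : ℝ) (x : ℂ) : 0 ≤ cutoffFn K x := le_max_left _ _

lemma cutoffFn_le_one (K : ℝ) (x : ℂ) : cutoffFn K x ≤ 1 :=
  max_le zero_le_one (min_le_left _ _)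

lemma cutoffFn_eq_one (K : ℝ) (x : ℂ) (h : K ≤ ‖x‖) : cutoffFn K x = 1 := by
  rw [cutoffFn_apply]
  have : (1:ℝ) ≤ ‖x‖ - (K - 1) := by linarith
  rw [min_eq_left this, max_eq_right zero_le_one]

lemma cutoffFn_eq_zero (K : ℝ) (x : ℂ) (h : ‖x‖ < K - 1) : cutoffFn K x = 0 := by
  rw [cutoffFn_apply]
  have : min 1 (‖x‖ - (K - 1)) ≤ 0 := le_trans (min_le_right _ _) (by linarith)
  exact max_eq_left this

lemma tight_aux {Ω : Type*} [MeasurableSpace Ω] (P : Measure Ω) [IsProbabilityMeasure P]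
    {Ω' : Type*} [MeasurableSpace Ω'] (P' : Measure Ω') [IsProbabilityMeasure P']
    (T : ℕ → Ω → ℂ) (hT : ∀ n, Measurable (T n))
    (Y : Ω' → ℂ) (hY : Measurable Y)
    (hconv : ∀ g : BoundedContinuousFunction ℂ ℝ,
      Tendsto (fun n => ∫ ω, g (T n ω) ∂P) atTop (nhds (∫ ω', g (Y ω') ∂P')))
    (ε : ℝ) (hε : 0 < ε) :
    ∃ K : ℝ, 1 ≤ K ∧ ∀ᶠ n in atTop, (P {ω | K ≤ ‖T n ω‖}).toReal ≤ ε := by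
  set s : ℕ → Set Ω' := fun j => {ω' | (j:ℝ) ≤ ‖Y ω'‖} with hs_def
  have hs_meas : ∀ j, MeasurableSet (s j) := fun j =>
    measurableSet_le measurable_const hY.norm
  have hs_anti : Antitone s := by
    intro j k hjk ω' hω'
    have : (j:ℝ) ≤ (k:ℝ) := Nat.cast_le.mpr hjk
    exact le_trans this hω'
  have hs_empty : ⋂ j, s j = ∅ := by
    ext ω'
    simp only [Set.mem_iInter, Set.mem_empty_iff_false, iff_false, not_forall]
    obtain ⟨j, hj⟩ := exists_nat_gt ‖Y ω'‖
    exact ⟨j, fun h => absurd h (not_le.mpr hj)⟩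
  have htend : Tendsto (fun j => (P' (s j)).toReal) atTop (nhds 0) := by
    have h1 : Tendsto (P' ∘ s) atTop (nhds (P' (⋂ j, s j))) :=
      tendsto_measure_iInter_atTop (fun j => (hs_meas j).nullMeasurableSet) hs_anti
        ⟨0, measure_ne_top _ _⟩
    rw [hs_empty, measure_empty] at h1
    have := (ENNReal.tendsto_toReal (by simp)).comp h1
    exact this
  obtain ⟨j, hj⟩ := (htend.eventually_lt_const (half_pos hε)).exists
  set K : ℝ := (j:ℝ) + 1 with hK_def
  refine ⟨K, by simp only [hK_def]; linarith [Nat.cast_nonneg (α := ℝ) j], ?_⟩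
  set φ := cutoffFn K with hφ_def
  -- ∫ φ(Y) ≤ P'(s j).toReal
  have hφY_int : Integrable (fun ω' => φ (Y ω')) P' := by
    refine Integrable.mono' (integrable_const 1)
      ((φ.continuous.measurable.comp hY).aestronglyMeasurable) ?_
    filter_upwards with ω'
    rw [Real.norm_eq_abs, abs_le]
    exact ⟨by linarith [cutoffFn_nonneg K (Y ω')], cutoffFn_le_one K (Y ω')⟩
  have hφY : ∫ ω', φ (Y ω') ∂P' ≤ (P' (s j)).toReal := by
    change _ ≤ P'.real (s j)
    rw [← integral_indicator_one (hs_meas j)]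
    refine integral_mono hφY_int ((integrable_const (1:ℝ)).indicator (hs_meas j)) ?_
    intro ω'
    by_cases h : (j:ℝ) ≤ ‖Y ω'‖
    · have : ω' ∈ s j := h
      simp only [Set.indicator_of_mem this, Pi.one_apply]
      exact cutoffFn_le_one K (Y ω')
    · have : ω' ∉ s j := h
      simp only [Set.indicator_of_notMem this]
      rw [cutoffFn_eq_zero]
      · push_neg at h; simpa [hK_def] using h
  have hφY_lt : ∫ ω', φ (Y ω') ∂P' < ε := lt_of_le_of_lt (hφY.trans hj.le) (half_lt_self hε)
  filter_upwards [(hconv φ).eventually_lt_const hφY_lt] with n hn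
  -- P{K ≤ ‖T n‖}.toReal ≤ ∫ φ(T n)
  have hmeas_set : MeasurableSet {ω | K ≤ ‖T n ω‖} :=
    measurableSet_le measurable_const (hT n).norm
  have hφT_int : Integrable (fun ω => φ (T n ω)) P := by
    refine Integrable.mono' (integrable_const 1)
      ((φ.continuous.measurable.comp (hT n)).aestronglyMeasurable) ?_
    filter_upwards with ω
    rw [Real.norm_eq_abs, abs_le]
    exact ⟨by linarith [cutoffFn_nonneg K (T n ω)], cutoffFn_le_one K (T n ω)⟩
  have key : (P {ω | K ≤ ‖T n ω‖}).toReal ≤ ∫ ω, φ (T n ω) ∂P := by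
    change P.real {ω | K ≤ ‖T n ω‖} ≤ _
    rw [← integral_indicator_one hmeas_set]
    refine integral_mono ((integrable_const (1:ℝ)).indicator hmeas_set) hφT_int ?_
    intro ω
    by_cases h : K ≤ ‖T n ω‖
    · have : ω ∈ {ω | K ≤ ‖T n ω‖} := h
      simp only [Set.indicator_of_mem this, Pi.one_apply]
      exact (cutoffFn_eq_one K _ h).ge
    · have : ω ∉ {ω | K ≤ ‖T n ω‖} := h
      simp only [Set.indicator_of_notMem this]
      exact cutoffFn_nonneg K _
  exact key.trans hn.le

/-- Complex delta method: if `b_n (X_n - m) → Y` in law with `b_n → ∞`, and `f` is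
measurable and complex differentiable on an open set containing `m`, then
`b_n (f(X_n) - f(m)) → f'(m) Y` in law. -/
theorem complex_delta_method
    {Ω : Type*} [MeasurableSpace Ω] (P : Measure Ω) [IsProbabilityMeasure P]
    {Ω' : Type*} [MeasurableSpace Ω'] (P' : Measure Ω') [IsProbabilityMeasure P']
    (X : ℕ → Ω → ℂ) (hX : ∀ n, Measurable (X n))
    (Y : Ω' → ℂ) (hY : Measurable Y)
    (m : ℂ) (b : ℕ → ℝ) (hb_pos : ∀ n, 0 < b n) (hb : Tendsto b atTop atTop)
    (hconv : ∀ g : BoundedContinuousFunction ℂ ℝ,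
      Tendsto (fun n => ∫ ω, g (((b n : ℝ) : ℂ) * (X n ω - m)) ∂P)
        atTop (nhds (∫ ω', g (Y ω') ∂P')))
    (f : ℂ → ℂ) (hf_meas : Measurable f)
    (U : Set ℂ) (hU : IsOpen U) (hmU : m ∈ U) (hf : DifferentiableOn ℂ f U) :
    ∀ g : BoundedContinuousFunction ℂ ℝ,
      Tendsto (fun n => ∫ ω, g (((b n : ℝ) : ℂ) * (f (X n ω) - f m)) ∂P)
        atTop (nhds (∫ ω', g (deriv f m * Y ω') ∂P')) := by
  intro g
  set c : ℂ := deriv f m with hc_def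
  -- measurability of the basic random variables
  have hT_meas : ∀ n, Measurable (fun ω => ((b n : ℝ) : ℂ) * (X n ω - m)) := fun n =>
    measurable_const.mul ((hX n).sub measurable_const)
  have hS_meas : ∀ n, Measurable (fun ω => ((b n : ℝ) : ℂ) * (f (X n ω) - f m)) := fun n =>
    measurable_const.mul ((hf_meas.comp (hX n)).sub measurable_const)
  -- the second bounded continuous function: g ∘ (c * ·)
  set g₂ : BoundedContinuousFunction ℂ ℝ :=
    g.compContinuous ⟨fun x => c * x, continuous_const.mul continuous_id⟩ with hg₂_def
  have hg₂_apply : ∀ x : ℂ, g₂ x = g (c * x) := fun x => rfl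
  have h2 : Tendsto (fun n => ∫ ω, g (c * (((b n : ℝ) : ℂ) * (X n ω - m))) ∂P)
      atTop (nhds (∫ ω', g (c * Y ω') ∂P')) := by
    have := hconv g₂
    simp only [hg₂_apply] at this
    exact this
  -- it suffices to show the difference of the two integral sequences tends to 0
  have hdiff : Tendsto (fun n =>
      (∫ ω, g (((b n : ℝ) : ℂ) * (f (X n ω) - f m)) ∂P) -
      (∫ ω, g (c * (((b n : ℝ) : ℂ) * (X n ω - m))) ∂P)) atTop (nhds 0) := by
    rw [NormedAddCommGroup.tendsto_nhds_zero]
    intro ε hε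
    have hG : (0:ℝ) ≤ ‖g‖ := norm_nonneg _
    set εA : ℝ := ε / (4 * (2 * ‖g‖ + 1)) with hεA_def
    have hεA_pos : 0 < εA := by positivity
    -- tightness
    obtain ⟨K, hK1, hKev⟩ := tight_aux P P'
      (fun n ω => ((b n : ℝ) : ℂ) * (X n ω - m)) hT_meas Y hY hconv εA hεA_pos
    have hK0 : (0:ℝ) < K := lt_of_lt_of_le one_pos hK1
    -- derivative and little-o
    have hder : HasDerivAt f c m :=
      (hf.differentiableAt (hU.mem_nhds hmU)).hasDerivAt
    have hlo := hasDerivAt_iff_isLittleO.mp hder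
    -- uniform continuity of g on a big ball
    set R : ℝ := (‖c‖ + 1) * K with hR_def
    have huc := (isCompact_closedBall (0:ℂ) R).uniformContinuousOn_of_continuous
      g.continuous.continuousOn
    rw [Metric.uniformContinuousOn_iff] at huc
    obtain ⟨δ₂, hδ₂_pos, hδ₂⟩ := huc (ε/4) (by positivity)
    set ε' : ℝ := min 1 δ₂ / (2 * K) with hε'_def
    have hε'_pos : 0 < ε' := by
      apply div_pos (lt_min one_pos hδ₂_pos) (by linarith)
    have hloB := hlo.def hε'_pos
    rw [Metric.eventually_nhds_iff] at hloB
    obtain ⟨δ, hδ_pos, hδ⟩ := hloB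
    -- eventual conditions on n
    filter_upwards [hKev, hb.eventually_ge_atTop (K / δ + 1)] with n hPn hbn
    have hbn_pos : (0:ℝ) < b n := hb_pos n
    set A : Set Ω := {ω | K ≤ ‖((b n : ℝ) : ℂ) * (X n ω - m)‖} with hA_def
    have hA_meas : MeasurableSet A :=
      measurableSet_le measurable_const (hT_meas n).norm
    -- integrability
    have int_gS : Integrable (fun ω => g (((b n : ℝ) : ℂ) * (f (X n ω) - f m))) P :=
      Integrable.mono' (integrable_const ‖g‖)
        ((g.continuous.measurable.comp (hS_meas n)).aestronglyMeasurable)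
        (Filter.Eventually.of_forall fun ω => g.norm_coe_le_norm _)
    have int_gcT : Integrable (fun ω => g (c * (((b n : ℝ) : ℂ) * (X n ω - m)))) P :=
      Integrable.mono' (integrable_const ‖g‖)
        ((g.continuous.measurable.comp (measurable_const.mul (hT_meas n))).aestronglyMeasurable)
        (Filter.Eventually.of_forall fun ω => g.norm_coe_le_norm _)
    -- pointwise bound
    have key : ∀ ω, |g (((b n : ℝ) : ℂ) * (f (X n ω) - f m)) -
        g (c * (((b n : ℝ) : ℂ) * (X n ω - m)))| ≤
        ε/4 + A.indicator (fun _ => 2 * ‖g‖) ω := by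
      intro ω
      by_cases hω : ω ∈ A
      · rw [Set.indicator_of_mem hω]
        have := g.dist_le_two_norm (((b n : ℝ) : ℂ) * (f (X n ω) - f m))
          (c * (((b n : ℝ) : ℂ) * (X n ω - m)))
        rw [Real.dist_eq] at this
        linarith
      · rw [Set.indicator_of_notMem hω, add_zero]
        have hTω : ‖((b n : ℝ) : ℂ) * (X n ω - m)‖ < K := not_le.mp hω
        have hTnorm : ‖((b n : ℝ) : ℂ) * (X n ω - m)‖ = b n * ‖X n ω - m‖ := by
          rw [norm_mul, Complex.norm_real, Real.norm_eq_abs, abs_of_pos hbn_pos]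
        have hXm : ‖X n ω - m‖ < δ := by
          have h1 : b n * ‖X n ω - m‖ < K := hTnorm ▸ hTω
          have h2 : K < δ * b n := by
            have : K / δ < b n := by linarith
            calc K = (K / δ) * δ := by field_simp
            _ < b n * δ := by
              apply mul_lt_mul_of_pos_right this hδ_pos
            _ = δ * b n := mul_comm _ _
          nlinarith [norm_nonneg (X n ω - m)]
        have hr := hδ (show dist (X n ω) m < δ by rwa [dist_eq_norm])
        -- ‖S - cT‖ bound
        have hkey : ‖((b n : ℝ) : ℂ) * (f (X n ω) - f m) -
            c * (((b n : ℝ) : ℂ) * (X n ω - m))‖ ≤ ε' * K := by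
          have heq : ((b n : ℝ) : ℂ) * (f (X n ω) - f m) -
              c * (((b n : ℝ) : ℂ) * (X n ω - m)) =
              ((b n : ℝ) : ℂ) * (f (X n ω) - f m - (X n ω - m) • c) := by
            simp only [smul_eq_mul]; ring
          rw [heq, norm_mul, Complex.norm_real, Real.norm_eq_abs, abs_of_pos hbn_pos]
          calc b n * ‖f (X n ω) - f m - (X n ω - m) • c‖
              ≤ b n * (ε' * ‖X n ω - m‖) := by
                apply mul_le_mul_of_nonneg_left hr hbn_pos.le
            _ = ε' * (b n * ‖X n ω - m‖) := by ring
            _ ≤ ε' * K := by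
                apply mul_le_mul_of_nonneg_left _ hε'_pos.le
                rw [← hTnorm]; exact hTω.le
        have hε'K : ε' * K = min 1 δ₂ / 2 := by
          rw [hε'_def]; field_simp
        have hSc_lt_δ₂ : ‖((b n : ℝ) : ℂ) * (f (X n ω) - f m) -
            c * (((b n : ℝ) : ℂ) * (X n ω - m))‖ < δ₂ := by
          rw [hε'K] at hkey
          have : min 1 δ₂ / 2 < δ₂ := by
            have := min_le_right (1:ℝ) δ₂; linarith
          linarith
        have hSc_le_half : ‖((b n : ℝ) : ℂ) * (f (X n ω) - f m) -
            c * (((b n : ℝ) : ℂ) * (X n ω - m))‖ ≤ 1/2 := by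
          rw [hε'K] at hkey
          have := min_le_left (1:ℝ) δ₂; linarith
        -- membership in the ball
        have hmem_cT : c * (((b n : ℝ) : ℂ) * (X n ω - m)) ∈ Metric.closedBall (0:ℂ) R := by
          rw [Metric.mem_closedBall, dist_zero_right, norm_mul]
          calc ‖c‖ * ‖((b n : ℝ) : ℂ) * (X n ω - m)‖ ≤ ‖c‖ * K :=
              mul_le_mul_of_nonneg_left hTω.le (norm_nonneg c)
          _ ≤ (‖c‖ + 1) * K := by nlinarith
        have hmem_S : ((b n : ℝ) : ℂ) * (f (X n ω) - f m) ∈ Metric.closedBall (0:ℂ) R := by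
          rw [Metric.mem_closedBall, dist_zero_right]
          have htri : ‖((b n : ℝ) : ℂ) * (f (X n ω) - f m)‖ ≤
              ‖c * (((b n : ℝ) : ℂ) * (X n ω - m))‖ +
              ‖((b n : ℝ) : ℂ) * (f (X n ω) - f m) -
                c * (((b n : ℝ) : ℂ) * (X n ω - m))‖ := by
            have := norm_add_le (c * (((b n : ℝ) : ℂ) * (X n ω - m)))
              (((b n : ℝ) : ℂ) * (f (X n ω) - f m) - c * (((b n : ℝ) : ℂ) * (X n ω - m)))
            simpa using this
          have hcT : ‖c * (((b n : ℝ) : ℂ) * (X n ω - m))‖ ≤ ‖c‖ * K := by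
            rw [norm_mul]
            exact mul_le_mul_of_nonneg_left hTω.le (norm_nonneg c)
          have : (1:ℝ)/2 ≤ K := by linarith
          calc ‖((b n : ℝ) : ℂ) * (f (X n ω) - f m)‖ ≤ ‖c‖ * K + 1/2 := by linarith
          _ ≤ ‖c‖ * K + K := by linarith
          _ = (‖c‖ + 1) * K := by ring
        have hfar := hδ₂ _ hmem_S _ hmem_cT
          (by rw [dist_eq_norm]; exact hSc_lt_δ₂)
        rw [Real.dist_eq] at hfar
        linarith
    -- combine the integral bounds
    have hbound : ‖(∫ ω, g (((b n : ℝ) : ℂ) * (f (X n ω) - f m)) ∂P) -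
        (∫ ω, g (c * (((b n : ℝ) : ℂ) * (X n ω - m))) ∂P)‖ ≤
        ε/4 + (P A).toReal * (2 * ‖g‖) := by
      rw [← integral_sub int_gS int_gcT]
      calc ‖∫ ω, (g (((b n : ℝ) : ℂ) * (f (X n ω) - f m)) -
              g (c * (((b n : ℝ) : ℂ) * (X n ω - m)))) ∂P‖
          ≤ ∫ ω, ‖g (((b n : ℝ) : ℂ) * (f (X n ω) - f m)) -
              g (c * (((b n : ℝ) : ℂ) * (X n ω - m)))‖ ∂P :=
            norm_integral_le_integral_norm _
        _ ≤ ∫ ω, (ε/4 + A.indicator (fun _ => 2 * ‖g‖) ω) ∂P := by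
            apply integral_mono ((int_gS.sub int_gcT).norm)
              ((integrable_const (ε/4)).add ((integrable_const (2 * ‖g‖)).indicator hA_meas))
            intro ω
            simp only [Pi.sub_apply, Pi.add_apply, Real.norm_eq_abs]
            exact key ω
        _ = ε/4 + (P A).toReal * (2 * ‖g‖) := by
            rw [integral_add (integrable_const _) ((integrable_const (2 * ‖g‖)).indicator hA_meas),
              integral_const, integral_indicator_const _ hA_meas]
            simp
            exact Or.inl rfl
    have hfinal : (P A).toReal * (2 * ‖g‖) ≤ εA * (2 * ‖g‖ + 1) := by
      calc (P A).toReal * (2 * ‖g‖) ≤ εA * (2 * ‖g‖) := by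
            apply mul_le_mul_of_nonneg_right hPn (by positivity)
      _ ≤ εA * (2 * ‖g‖ + 1) := by nlinarith
    have hεAe : εA * (2 * ‖g‖ + 1) = ε/4 := by
      rw [hεA_def]; field_simp
    calc ‖(∫ ω, g (((b n : ℝ) : ℂ) * (f (X n ω) - f m)) ∂P) -
        (∫ ω, g (c * (((b n : ℝ) : ℂ) * (X n ω - m))) ∂P)‖
        ≤ ε/4 + (P A).toReal * (2 * ‖g‖) := hbound
      _ ≤ ε/4 + ε/4 := by rw [← hεAe]; linarith
      _ < ε := by linarith
  have := hdiff.add h2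
  simp only [zero_add, sub_add_cancel] at this
  exact this
end

section
/- Let γ = μ + iσ with μ ∈ ℝ and σ > 0, let X_1, X_2, … ∼ C(γ) be independent, and let I ⊂ ℝ be a closed bounded interval. Then the family of real random variables (sup_{θ ∈ I} |θ + ∏_{j=1}^N (X_j − θ)^{1/N} − γ|)_{N ≥ 2} is uniformly integrable, where each (X_j − θ)^{1/N} is taken in the principal branch. -/
open MeasureTheory ProbabilityTheory Filter

namespace SGM

open Set

lemma exp_ineq (u : ℝ) : Real.exp u ≤ 1 + u * Real.exp u := by
  have h := Real.add_one_le_exp (-u)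
  have hp := Real.exp_pos u
  have h2 : (-u + 1) * Real.exp u ≤ Real.exp (-u) * Real.exp u :=
    mul_le_mul_of_nonneg_right h (le_of_lt hp)
  rw [← Real.exp_add, neg_add_cancel, Real.exp_zero] at h2
  nlinarith

lemma rpow_le_one_add {t s : ℝ} (ht : 1 ≤ t) (hs : 0 ≤ s) (hs' : s ≤ 3/4) :
    t ^ s ≤ 1 + s * (t ^ ((3:ℝ)/4) * Real.log t) := by
  have ht0 : 0 < t := lt_of_lt_of_le one_pos ht
  have hL : 0 ≤ Real.log t := Real.log_nonneg ht
  have h1 : t ^ s = Real.exp (Real.log t * s) := Real.rpow_def_of_pos ht0 s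
  have h2 : t ^ s ≤ t ^ ((3:ℝ)/4) := Real.rpow_le_rpow_of_exponent_le ht hs'
  have h3 : t ^ s ≤ 1 + (Real.log t * s) * Real.exp (Real.log t * s) := by
    rw [h1]; exact exp_ineq _
  rw [← h1] at h3
  have h4 : Real.log t * s * t ^ s ≤ s * (t ^ ((3:ℝ)/4) * Real.log t) := by
    have : Real.log t * t ^ s ≤ Real.log t * t ^ ((3:ℝ)/4) :=
      mul_le_mul_of_nonneg_left h2 hL
    nlinarith
  linarith

lemma log_le_rpow {t : ℝ} (ht : 1 ≤ t) : Real.log t ≤ 8 * t ^ ((8:ℝ)⁻¹) := by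
  have ht0 : 0 < t := lt_of_lt_of_le one_pos ht
  have h := Real.log_rpow ht0 ((8:ℝ)⁻¹)
  have h2 : Real.log (t ^ ((8:ℝ)⁻¹)) ≤ t ^ ((8:ℝ)⁻¹) := by
    have := Real.log_le_sub_one_of_pos (Real.rpow_pos_of_pos ht0 ((8:ℝ)⁻¹))
    linarith
  rw [h] at h2
  linarith

lemma integrable_aux (m σ C : ℝ) (hσ : 0 < σ) (hC : 1 ≤ C) :
    Integrable (fun x : ℝ => (|x| + C) ^ ((7:ℝ)/8) / ((x - m) ^ 2 + σ ^ 2)) := by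
  have hden : ∀ x : ℝ, 0 < (x - m) ^ 2 + σ ^ 2 := fun x => by positivity
  have hnum0 : ∀ x : ℝ, (0:ℝ) < |x| + C := fun x => by
    have := abs_nonneg x; linarith
  have hcont : Continuous fun x : ℝ => (|x| + C) ^ ((7:ℝ)/8) / ((x - m) ^ 2 + σ ^ 2) := by
    apply Continuous.div
    · exact (continuous_abs.add continuous_const).rpow_const fun x => Or.inr (by norm_num)
    · continuity
    · exact fun x => (hden x).ne'
  set R : ℝ := 2 * |m| + C + 1 with hRdef
  have hR1 : 1 ≤ R := by have := abs_nonneg m; simp only [hRdef]; linarith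
  have hRpos : 0 < R := lt_of_lt_of_le one_pos hR1
  have key : ∀ x : ℝ, R ≤ |x| → (|x| + C) ^ ((7:ℝ)/8) / ((x - m) ^ 2 + σ ^ 2)
      ≤ 4 * (1 + C) * |x| ^ (-(9:ℝ)/8) := by
    intro x hx
    have hx1 : 1 ≤ |x| := le_trans hR1 hx
    have hx0 : 0 < |x| := lt_of_lt_of_le one_pos hx1
    have hC0 : (0:ℝ) ≤ C := by linarith
    have hnum : (|x| + C) ^ ((7:ℝ)/8) ≤ (1 + C) * |x| ^ ((7:ℝ)/8) := by
      have h1 : |x| + C ≤ (1 + C) * |x| := by nlinarith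
      calc (|x| + C) ^ ((7:ℝ)/8) ≤ ((1 + C) * |x|) ^ ((7:ℝ)/8) :=
            Real.rpow_le_rpow (by positivity) h1 (by norm_num)
        _ = (1 + C) ^ ((7:ℝ)/8) * |x| ^ ((7:ℝ)/8) := Real.mul_rpow (by linarith) (abs_nonneg x)
        _ ≤ (1 + C) * |x| ^ ((7:ℝ)/8) := by
            have h2 := Real.rpow_le_rpow_of_exponent_le
              (show (1:ℝ) ≤ 1 + C by linarith) (show (7:ℝ)/8 ≤ 1 by norm_num)
            rw [Real.rpow_one] at h2
            exact mul_le_mul_of_nonneg_right h2 (Real.rpow_nonneg (abs_nonneg x) _)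
    have hden2 : |x| ^ 2 / 4 ≤ (x - m) ^ 2 + σ ^ 2 := by
      have h1 : |x| - |m| ≤ |x - m| := by
        have := abs_sub_abs_le_abs_sub x m; linarith
      have hm2 : 2 * |m| ≤ |x| := by
        have : 2 * |m| ≤ R := by simp only [hRdef]; linarith
        linarith
      have h2 : |x| / 2 ≤ |x - m| := by linarith
      have h3 : (|x| / 2) ^ 2 ≤ |x - m| ^ 2 := by
        have := abs_nonneg (x - m); nlinarith
      have h4 : |x - m| ^ 2 = (x - m) ^ 2 := sq_abs _
      nlinarith [sq_nonneg σ]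
    have hd4 : (0:ℝ) < |x| ^ 2 / 4 := by positivity
    calc (|x| + C) ^ ((7:ℝ)/8) / ((x - m) ^ 2 + σ ^ 2)
        ≤ ((1 + C) * |x| ^ ((7:ℝ)/8)) / (|x| ^ 2 / 4) :=
          div_le_div₀ (by positivity) hnum hd4 hden2
      _ = 4 * (1 + C) * (|x| ^ ((7:ℝ)/8) / |x| ^ 2) := by ring
      _ = 4 * (1 + C) * |x| ^ (-(9:ℝ)/8) := by
          rw [← Real.rpow_natCast |x| 2, ← Real.rpow_sub hx0]
          norm_num
  have hIoi : IntegrableOn (fun x : ℝ => (|x| + C) ^ ((7:ℝ)/8) / ((x - m) ^ 2 + σ ^ 2))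
      (Ioi R) := by
    have hg : IntegrableOn (fun x : ℝ => 4 * (1 + C) * x ^ (-(9:ℝ)/8)) (Ioi R) :=
      (integrableOn_Ioi_rpow_of_lt (by norm_num) hRpos).const_mul _
    apply Integrable.mono' hg hcont.aestronglyMeasurable.restrict
    filter_upwards [ae_restrict_mem measurableSet_Ioi] with x hx
    have hxpos : 0 < x := lt_trans hRpos hx
    have hxR : R ≤ |x| := by rw [abs_of_pos hxpos]; exact le_of_lt hx
    have hk := key x hxR
    rw [Real.norm_eq_abs, abs_of_nonneg (by positivity),
      show x ^ (-(9:ℝ)/8) = |x| ^ (-(9:ℝ)/8) by rw [abs_of_pos hxpos]]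
    exact hk
  have hIio : IntegrableOn (fun x : ℝ => (|x| + C) ^ ((7:ℝ)/8) / ((x - m) ^ 2 + σ ^ 2))
      (Iio (-R)) := by
    have hg : IntegrableOn (fun x : ℝ => 4 * (1 + C) * x ^ (-(9:ℝ)/8)) (Ioi R) :=
      (integrableOn_Ioi_rpow_of_lt (by norm_num) hRpos).const_mul _
    have hg1 : Integrable ((Ioi R).indicator fun x : ℝ => 4 * (1 + C) * x ^ (-(9:ℝ)/8)) :=
      (integrable_indicator_iff measurableSet_Ioi).mpr hg
    have hg2 : Integrable fun x : ℝ =>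
        (Ioi R).indicator (fun y : ℝ => 4 * (1 + C) * y ^ (-(9:ℝ)/8)) (-x) := hg1.comp_neg
    have heqI : (fun x : ℝ => (Ioi R).indicator (fun y : ℝ => 4 * (1 + C) * y ^ (-(9:ℝ)/8)) (-x))
        = (Iio (-R)).indicator (fun x : ℝ => 4 * (1 + C) * (-x) ^ (-(9:ℝ)/8)) := by
      funext x
      by_cases h : x < -R
      · rw [Set.indicator_of_mem (Set.mem_Iio.mpr h),
          Set.indicator_of_mem (Set.mem_Ioi.mpr (by linarith))]
      · rw [Set.indicator_of_notMem (fun hc => h (Set.mem_Iio.mp hc)),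
          Set.indicator_of_notMem (fun hc => h (by have := Set.mem_Ioi.mp hc; linarith))]
    rw [heqI] at hg2
    have hg3 : IntegrableOn (fun x : ℝ => 4 * (1 + C) * (-x) ^ (-(9:ℝ)/8)) (Iio (-R)) :=
      (integrable_indicator_iff measurableSet_Iio).mp hg2
    apply Integrable.mono' hg3 hcont.aestronglyMeasurable.restrict
    filter_upwards [ae_restrict_mem measurableSet_Iio] with x hx
    have hxneg : x < 0 := lt_trans hx (by linarith)
    have hxR : R ≤ |x| := by rw [abs_of_neg hxneg]; simp only [Set.mem_Iio] at hx; linarith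
    have hk := key x hxR
    rw [Real.norm_eq_abs, abs_of_nonneg (by positivity),
      show (-x) ^ (-(9:ℝ)/8) = |x| ^ (-(9:ℝ)/8) by rw [abs_of_neg hxneg]]
    exact hk
  have hIcc : IntegrableOn (fun x : ℝ => (|x| + C) ^ ((7:ℝ)/8) / ((x - m) ^ 2 + σ ^ 2))
      (Icc (-R) R) := hcont.integrableOn_Icc
  have hun : IntegrableOn (fun x : ℝ => (|x| + C) ^ ((7:ℝ)/8) / ((x - m) ^ 2 + σ ^ 2))
      (Iio (-R) ∪ (Icc (-R) R ∪ Ioi R)) := hIio.union (hIcc.union hIoi)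
  rw [← integrableOn_univ]
  apply hun.mono_set
  intro x _
  by_cases h1 : x < -R
  · exact Or.inl h1
  · push_neg at h1
    by_cases h2 : R < x
    · exact Or.inr (Or.inr h2)
    · push_neg at h2
      exact Or.inr (Or.inl ⟨h1, h2⟩)


lemma dens_measurable (m σ : ℝ) (hσ : 0 < σ) :
    Measurable fun x : ℝ => ENNReal.ofReal (σ / (Real.pi * ((x - m) ^ 2 + σ ^ 2))) := by
  apply Measurable.ennreal_ofReal
  apply Continuous.measurable
  apply Continuous.div continuous_const (by continuity)
  intro x
  have h1 : 0 < (x - m) ^ 2 + σ ^ 2 := by positivity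
  positivity

lemma cauchy_lintegral (m σ : ℝ) (hσ : 0 < σ) (g : ℝ → ENNReal) (hg : Measurable g) :
    ∫⁻ x, g x ∂(cauchyMeasure m σ) =
      ∫⁻ x, ENNReal.ofReal (σ / (Real.pi * ((x - m) ^ 2 + σ ^ 2))) * g x := by
  rw [_root_.cauchyMeasure, lintegral_withDensity_eq_lintegral_mul _ (dens_measurable m σ hσ) hg]
  rfl

lemma hfun_measurable (C e : ℝ) (he : 0 ≤ e) :
    Measurable fun x : ℝ => ENNReal.ofReal ((|x| + C) ^ e) := by
  apply Measurable.ennreal_ofReal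
  exact ((continuous_abs.add continuous_const).rpow_const fun x => Or.inr he).measurable

noncomputable def AA (m σ C : ℝ) : ℝ :=
  (∫⁻ x, ENNReal.ofReal ((|x| + C) ^ ((3:ℝ)/4) * Real.log (|x| + C))
    ∂(cauchyMeasure m σ)).toReal

lemma AA_nonneg (m σ C : ℝ) : 0 ≤ AA m σ C := ENNReal.toReal_nonneg

lemma AA_lt_top (m σ C : ℝ) (hσ : 0 < σ) (hC : 1 ≤ C) :
    ∫⁻ x, ENNReal.ofReal ((|x| + C) ^ ((3:ℝ)/4) * Real.log (|x| + C))
      ∂(cauchyMeasure m σ) < ⊤ := by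
  have hmeas : Measurable fun x : ℝ =>
      ENNReal.ofReal ((|x| + C) ^ ((3:ℝ)/4) * Real.log (|x| + C)) := by
    apply Measurable.ennreal_ofReal
    apply Measurable.mul
    · exact ((continuous_abs.add continuous_const).rpow_const
        fun x => Or.inr (by norm_num)).measurable
    · apply Continuous.measurable
      apply Continuous.log (continuous_abs.add continuous_const)
      intro x hc
      have := abs_nonneg x
      simp only [Pi.add_apply] at hc; linarith
  rw [cauchy_lintegral m σ hσ _ hmeas]
  have hb : ∀ x : ℝ, ENNReal.ofReal (σ / (Real.pi * ((x - m) ^ 2 + σ ^ 2))) *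
      ENNReal.ofReal ((|x| + C) ^ ((3:ℝ)/4) * Real.log (|x| + C))
      ≤ ENNReal.ofReal ((8 * σ / Real.pi) *
        ((|x| + C) ^ ((7:ℝ)/8) / ((x - m) ^ 2 + σ ^ 2))) := by
    intro x
    have hu1 : (1:ℝ) ≤ |x| + C := by have := abs_nonneg x; linarith
    have hu0 : (0:ℝ) < |x| + C := lt_of_lt_of_le one_pos hu1
    have hd0 : (0:ℝ) < (x - m) ^ 2 + σ ^ 2 := by positivity
    rw [← ENNReal.ofReal_mul (by positivity)]
    apply ENNReal.ofReal_le_ofReal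
    have h1 : (|x| + C) ^ ((3:ℝ)/4) * Real.log (|x| + C)
        ≤ 8 * (|x| + C) ^ ((7:ℝ)/8) := by
      calc (|x| + C) ^ ((3:ℝ)/4) * Real.log (|x| + C)
          ≤ (|x| + C) ^ ((3:ℝ)/4) * (8 * (|x| + C) ^ ((8:ℝ)⁻¹)) := by
            apply mul_le_mul_of_nonneg_left (log_le_rpow hu1) (Real.rpow_nonneg hu0.le _)
        _ = 8 * ((|x| + C) ^ ((3:ℝ)/4) * (|x| + C) ^ ((8:ℝ)⁻¹)) := by ring
        _ = 8 * (|x| + C) ^ ((7:ℝ)/8) := by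
            rw [← Real.rpow_add hu0]; norm_num
    calc σ / (Real.pi * ((x - m) ^ 2 + σ ^ 2)) *
          ((|x| + C) ^ ((3:ℝ)/4) * Real.log (|x| + C))
        ≤ σ / (Real.pi * ((x - m) ^ 2 + σ ^ 2)) * (8 * (|x| + C) ^ ((7:ℝ)/8)) := by
          apply mul_le_mul_of_nonneg_left h1
          have := Real.pi_pos; positivity
      _ = (8 * σ / Real.pi) * ((|x| + C) ^ ((7:ℝ)/8) / ((x - m) ^ 2 + σ ^ 2)) := by
          field_simp
  calc ∫⁻ x, ENNReal.ofReal (σ / (Real.pi * ((x - m) ^ 2 + σ ^ 2))) *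
        ENNReal.ofReal ((|x| + C) ^ ((3:ℝ)/4) * Real.log (|x| + C))
      ≤ ∫⁻ x, ENNReal.ofReal ((8 * σ / Real.pi) *
          ((|x| + C) ^ ((7:ℝ)/8) / ((x - m) ^ 2 + σ ^ 2))) := lintegral_mono hb
    _ ≤ ∫⁻ x, ‖(8 * σ / Real.pi) *
          ((|x| + C) ^ ((7:ℝ)/8) / ((x - m) ^ 2 + σ ^ 2))‖ₑ := by
        apply lintegral_mono; intro x; exact Real.ofReal_le_enorm _
    _ < ⊤ := ((integrable_aux m σ C hσ hC).const_mul _).hasFiniteIntegral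

lemma moment_bound (m σ C : ℝ) (hσ : 0 < σ) (hC : 1 ≤ C)
    (hprob : IsProbabilityMeasure (cauchyMeasure m σ)) {s : ℝ} (hs : 0 ≤ s) (hs' : s ≤ 3/4) :
    ∫⁻ x, ENNReal.ofReal ((|x| + C) ^ s) ∂(cauchyMeasure m σ)
      ≤ ENNReal.ofReal (1 + s * AA m σ C) := by
  have hAfin := AA_lt_top m σ C hσ hC
  have hA : ENNReal.ofReal (AA m σ C)
      = ∫⁻ x, ENNReal.ofReal ((|x| + C) ^ ((3:ℝ)/4) * Real.log (|x| + C))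
        ∂(cauchyMeasure m σ) := ENNReal.ofReal_toReal hAfin.ne
  have hb : ∀ x : ℝ, ENNReal.ofReal ((|x| + C) ^ s)
      ≤ 1 + ENNReal.ofReal s *
        ENNReal.ofReal ((|x| + C) ^ ((3:ℝ)/4) * Real.log (|x| + C)) := by
    intro x
    have hu1 : (1:ℝ) ≤ |x| + C := by have := abs_nonneg x; linarith
    have hh0 : 0 ≤ (|x| + C) ^ ((3:ℝ)/4) * Real.log (|x| + C) :=
      mul_nonneg (Real.rpow_nonneg (by linarith) _) (Real.log_nonneg hu1)
    calc ENNReal.ofReal ((|x| + C) ^ s)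
        ≤ ENNReal.ofReal (1 + s * ((|x| + C) ^ ((3:ℝ)/4) * Real.log (|x| + C))) :=
          ENNReal.ofReal_le_ofReal (rpow_le_one_add hu1 hs hs')
      _ = 1 + ENNReal.ofReal s *
          ENNReal.ofReal ((|x| + C) ^ ((3:ℝ)/4) * Real.log (|x| + C)) := by
          rw [ENNReal.ofReal_add zero_le_one (mul_nonneg hs hh0), ENNReal.ofReal_one,
            ENNReal.ofReal_mul hs]
  calc ∫⁻ x, ENNReal.ofReal ((|x| + C) ^ s) ∂(cauchyMeasure m σ)
      ≤ ∫⁻ x, 1 + ENNReal.ofReal s *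
          ENNReal.ofReal ((|x| + C) ^ ((3:ℝ)/4) * Real.log (|x| + C))
          ∂(cauchyMeasure m σ) := lintegral_mono hb
    _ = 1 + ENNReal.ofReal s *
        ∫⁻ x, ENNReal.ofReal ((|x| + C) ^ ((3:ℝ)/4) * Real.log (|x| + C))
          ∂(cauchyMeasure m σ) := by
        rw [lintegral_add_left measurable_const, lintegral_const_mul' _ _ ENNReal.ofReal_ne_top,
          lintegral_const, measure_univ, mul_one]
    _ = 1 + ENNReal.ofReal s * ENNReal.ofReal (AA m σ C) := by rw [hA]
    _ = ENNReal.ofReal (1 + s * AA m σ C) := by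
        rw [ENNReal.ofReal_add zero_le_one (mul_nonneg hs (AA_nonneg m σ C)),
          ENNReal.ofReal_one, ENNReal.ofReal_mul hs]

lemma prod_lintegral {Ω : Type*} [MeasurableSpace Ω] {P : Measure Ω} [IsProbabilityMeasure P]
    (X : ℕ → Ω → ℝ) (hX : ∀ j, Measurable (X j))
    (hindep : iIndepFun X P)
    (φ : ℝ → ENNReal) (hφ : Measurable φ) (N : ℕ) :
    ∫⁻ ω, ∏ j ∈ Finset.range N, φ (X j ω) ∂P
      = ∏ j ∈ Finset.range N, ∫⁻ ω, φ (X j ω) ∂P := by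
  induction N with
  | zero => simp
  | succ n ih =>
    have hφX : ∀ i, Measurable fun ω => φ (X i ω) := fun i => hφ.comp (hX i)
    have hind0 := (hindep.comp (fun _ => φ) (fun _ => hφ)).indepFun_finset_prod_of_notMem
      (fun i => hφX i) (Finset.notMem_range_self (n := n))
    have hind : IndepFun (fun ω => ∏ j ∈ Finset.range n, φ (X j ω))
        (fun ω => φ (X n ω)) P := by
      have : (fun ω => ∏ j ∈ Finset.range n, φ (X j ω))
          = ∏ j ∈ Finset.range n, (φ ∘ X j) := by
        funext ω; simp [Finset.prod_apply]
      rw [this]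
      exact hind0
    have heq : (fun ω => ∏ j ∈ Finset.range (n+1), φ (X j ω))
        = fun ω => (∏ j ∈ Finset.range n, φ (X j ω)) * φ (X n ω) := by
      funext ω; exact Finset.prod_range_succ _ n
    rw [heq, lintegral_mul_eq_lintegral_mul_lintegral_of_indepFun''
      (Finset.measurable_prod _ fun i _ => hφX i).aemeasurable (hφX n).aemeasurable hind,
      ih, Finset.prod_range_succ]


lemma sup_dense_eq {F : ℝ → ℝ} (hF : Continuous F) (hF0 : ∀ θ, 0 ≤ F θ) {a b M : ℝ}
    (hM : 0 ≤ M) (hFM : ∀ θ ∈ Set.Icc a b, F θ ≤ M) (T' : Set ℝ)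
    (hT'sub : T' ⊆ Set.Icc a b) (hT'd : Set.Icc a b ⊆ closure T') :
    (⨆ θ, ⨆ _ : θ ∈ Set.Icc a b, F θ) = ⨆ t : T', F t := by
  have hbddT : BddAbove (Set.range fun t : T' => F t) := by
    refine ⟨M, ?_⟩; rintro x ⟨t, rfl⟩; exact hFM t (hT'sub t.2)
  have h1 : ∀ t : T', F t ≤ ⨆ t : T', F t := fun t => le_ciSup hbddT t
  have hR0 : 0 ≤ ⨆ t : T', F t := Real.iSup_nonneg fun t => hF0 t
  apply le_antisymm
  · apply Real.iSup_le _ hR0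
    intro θ
    apply Real.iSup_le _ hR0
    intro hθ
    have hmemc : F θ ∈ closure (F '' T') :=
      image_closure_subset_closure_image hF ⟨θ, hT'd hθ, rfl⟩
    have hsub : F '' T' ⊆ Set.Iic (⨆ t : T', F t) := by
      rintro x ⟨t, ht, rfl⟩; exact h1 ⟨t, ht⟩
    exact (closure_minimal hsub isClosed_Iic) hmemc
  · apply Real.iSup_le _ ?_
    · intro t
      have ht : (t : ℝ) ∈ Set.Icc a b := hT'sub t.2
      have hbdd2 : BddAbove (Set.range fun θ : ℝ => ⨆ _ : θ ∈ Set.Icc a b, F θ) := by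
        refine ⟨max M 0, ?_⟩
        rintro x ⟨θ, rfl⟩
        dsimp only
        by_cases hθ : θ ∈ Set.Icc a b
        · rw [ciSup_pos (f := fun _ : θ ∈ Set.Icc a b => F θ) hθ]
          exact le_max_of_le_left (hFM θ hθ)
        · rw [ciSup_neg (f := fun _ : θ ∈ Set.Icc a b => F θ) hθ, Real.sSup_empty]
          exact le_max_right _ _
      calc F t = ⨆ _ : (t:ℝ) ∈ Set.Icc a b, F (t:ℝ) :=
            (ciSup_pos (f := fun _ : (t:ℝ) ∈ Set.Icc a b => F (t:ℝ)) ht).symm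
        _ ≤ ⨆ θ : ℝ, ⨆ _ : θ ∈ Set.Icc a b, F θ := le_ciSup hbdd2 (t:ℝ)
    · exact Real.iSup_nonneg fun θ => Real.iSup_nonneg fun _ => hF0 θ

end SGM

/-- For independent Cauchy samples `X_1, X_2, … ∼ C(γ)` and a closed bounded interval
`I = [a, b]`, the family `(sup_{θ ∈ I} |θ + ∏_{j=1}^N (X_j - θ)^{1/N} - γ|)_{N ≥ 2}`
is uniformly integrable: each member is integrable, and
`sup_{N ≥ 2} E[Y_N · 1_{Y_N > K}] → 0` as `K → ∞`. -/
theorem shifted_geometric_mean_uniformly_integrable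
    {Ω : Type*} [MeasurableSpace Ω] (P : Measure Ω) [IsProbabilityMeasure P]
    (γ : ℂ) (hγ : 0 < γ.im)
    (X : ℕ → Ω → ℝ) (hX : ∀ j, Measurable (X j))
    (hindep : iIndepFun X P)
    (hlaw : ∀ j, Measure.map (X j) P = cauchyMeasure γ.re γ.im)
    (a b : ℝ)
    (Y : ℕ → Ω → ℝ)
    (hY : ∀ N ω, Y N ω = ⨆ θ ∈ Set.Icc a b,
      ‖((θ : ℂ)
        + (∏ j ∈ Finset.range N, (((X j ω : ℂ)) - (θ : ℂ)) ^ ((N : ℂ))⁻¹) - γ)‖) :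
    (∀ N, 2 ≤ N → Integrable (Y N) P) ∧
      ∀ ε : ℝ, 0 < ε → ∃ K : ℝ, ∀ N, 2 ≤ N →
        ∫ ω in {ω | K < Y N ω}, Y N ω ∂P ≤ ε := by
  classical
  have hprob : IsProbabilityMeasure (cauchyMeasure γ.re γ.im) := by
    rw [← hlaw 0]; exact Measure.isProbabilityMeasure_map (hX 0).aemeasurable
  set C : ℝ := max 1 (max |a| |b|) with hCdef
  have hC1 : (1:ℝ) ≤ C := le_max_left _ _
  have hC0 : (0:ℝ) ≤ C := by linarith
  set D : ℝ := C + ‖γ‖ with hDdef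
  have hD0 : 0 ≤ D := add_nonneg hC0 (norm_nonneg _)
  set A : ℝ := SGM.AA γ.re γ.im C with hAdef
  have hA0 : 0 ≤ A := SGM.AA_nonneg _ _ _
  set W : ℕ → Ω → ℝ := fun j ω => |X j ω| + C with hWdef
  have hW0 : ∀ j ω, 0 ≤ W j ω := fun j ω => add_nonneg (abs_nonneg _) hC0
  -- the joint moment bound
  have hkey : ∀ N : ℕ, 2 ≤ N → ∀ c : ℝ, 0 < c → c ≤ 3/2 →
      ∫⁻ ω, ENNReal.ofReal (∏ j ∈ Finset.range N, (W j ω) ^ (c / (N:ℝ))) ∂P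
        ≤ ENNReal.ofReal (Real.exp (3/2 * A)) := by
    intro N hN c hc hc'
    have hN2 : (2:ℝ) ≤ (N:ℝ) := by exact_mod_cast hN
    have hNpos : (0:ℝ) < (N:ℝ) := by linarith
    have he0 : 0 ≤ c / (N:ℝ) := by positivity
    have he' : c / (N:ℝ) ≤ 3/4 := by
      rw [div_le_iff₀ hNpos]; nlinarith
    set φ : ℝ → ENNReal := fun y => ENNReal.ofReal ((|y| + C) ^ (c / (N:ℝ))) with hφdef
    have hφm : Measurable φ := SGM.hfun_measurable C _ he0
    have h1 : ∀ ω, ENNReal.ofReal (∏ j ∈ Finset.range N, (W j ω) ^ (c / (N:ℝ)))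
        = ∏ j ∈ Finset.range N, φ (X j ω) := fun ω =>
      ENNReal.ofReal_prod_of_nonneg fun i _ => Real.rpow_nonneg (hW0 i ω) _
    rw [lintegral_congr h1, SGM.prod_lintegral X hX hindep φ hφm N]
    have h2 : ∀ j, ∫⁻ ω, φ (X j ω) ∂P = ∫⁻ y, φ y ∂(cauchyMeasure γ.re γ.im) := fun j => by
      rw [← hlaw j]; exact (lintegral_map hφm (hX j)).symm
    have hmom := SGM.moment_bound γ.re γ.im C hγ hC1 hprob he0 he'
    have hreal : (1 + c / (N:ℝ) * A) ^ N ≤ Real.exp (3/2 * A) := by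
      have h3 : (1 + c / (N:ℝ) * A) ≤ Real.exp (c / (N:ℝ) * A) := by
        have := Real.add_one_le_exp (c / (N:ℝ) * A); linarith
      have h4 : (1 + c / (N:ℝ) * A) ^ N ≤ Real.exp (c / (N:ℝ) * A) ^ N :=
        pow_le_pow_left₀ (by positivity) h3 N
      have h5 : Real.exp (c / (N:ℝ) * A) ^ N = Real.exp ((N:ℝ) * (c / (N:ℝ) * A)) :=
        (Real.exp_nat_mul _ N).symm
      have h6 : (N:ℝ) * (c / (N:ℝ) * A) = c * A := by field_simp
      have h7 : c * A ≤ 3/2 * A := by nlinarith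
      calc (1 + c / (N:ℝ) * A) ^ N ≤ Real.exp (c / (N:ℝ) * A) ^ N := h4
        _ = Real.exp (c * A) := by rw [h5, h6]
        _ ≤ Real.exp (3/2 * A) := Real.exp_le_exp.mpr h7
    calc ∏ j ∈ Finset.range N, ∫⁻ ω, φ (X j ω) ∂P
        = (∫⁻ y, φ y ∂(cauchyMeasure γ.re γ.im)) ^ N := by
          rw [Finset.prod_congr rfl fun j _ => h2 j, Finset.prod_const, Finset.card_range]
      _ ≤ (ENNReal.ofReal (1 + c / (N:ℝ) * A)) ^ N := pow_le_pow_left' hmom N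
      _ = ENNReal.ofReal ((1 + c / (N:ℝ) * A) ^ N) := (ENNReal.ofReal_pow (by positivity) N).symm
      _ ≤ ENNReal.ofReal (Real.exp (3/2 * A)) := ENNReal.ofReal_le_ofReal hreal
  -- pointwise bound
  have hbound : ∀ N : ℕ, 0 < N → ∀ ω θ, θ ∈ Set.Icc a b →
      ‖((θ : ℂ)
          + (∏ j ∈ Finset.range N, (((X j ω : ℂ)) - (θ : ℂ)) ^ ((N : ℂ))⁻¹) - γ)‖
        ≤ D + ∏ j ∈ Finset.range N, (W j ω) ^ ((1:ℝ) / (N:ℝ)) := by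
    intro N hN ω θ hθ
    have hθC : |θ| ≤ C :=
      le_trans (abs_le_max_abs_abs hθ.1 hθ.2) (le_max_right 1 (max |a| |b|))
    have hfac : ∀ j, ‖((((X j ω : ℂ)) - (θ : ℂ)) ^ ((N : ℂ))⁻¹)‖
        ≤ (W j ω) ^ ((1:ℝ) / (N:ℝ)) := by
      intro j
      have h1 : ‖(((X j ω : ℂ)) - (θ : ℂ))‖ = |X j ω - θ| := by
        rw [← Complex.ofReal_sub, Complex.norm_real, Real.norm_eq_abs]
      have h2 : |X j ω - θ| ≤ W j ω := by
        have := abs_sub_abs_le_abs_sub (X j ω) θ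
        have h3 : |X j ω - θ| ≤ |X j ω| + |θ| := by
          rw [sub_eq_add_neg]; exact (abs_add_le _ _).trans (by rw [abs_neg])
        simp only [hWdef]; linarith
      calc ‖((((X j ω : ℂ)) - (θ : ℂ)) ^ ((N : ℂ))⁻¹)‖
          = ‖(((X j ω : ℂ)) - (θ : ℂ))‖ ^ (((N:ℝ))⁻¹) :=
            Complex.norm_cpow_inv_nat _ N
        _ ≤ (W j ω) ^ (((N:ℝ))⁻¹) :=
            Real.rpow_le_rpow (norm_nonneg _) (h1 ▸ h2) (by positivity)
        _ = (W j ω) ^ ((1:ℝ) / (N:ℝ)) := by rw [one_div]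
    calc ‖((θ : ℂ)
          + (∏ j ∈ Finset.range N, (((X j ω : ℂ)) - (θ : ℂ)) ^ ((N : ℂ))⁻¹) - γ)‖
        = ‖(θ : ℂ) + (∏ j ∈ Finset.range N, (((X j ω : ℂ)) - (θ : ℂ)) ^ ((N : ℂ))⁻¹) - γ‖ :=
          rfl
      _ ≤ ‖(θ : ℂ) + (∏ j ∈ Finset.range N, (((X j ω : ℂ)) - (θ : ℂ)) ^ ((N : ℂ))⁻¹)‖ + ‖γ‖ :=
          norm_sub_le _ _
      _ ≤ ‖(θ : ℂ)‖ + ‖∏ j ∈ Finset.range N, (((X j ω : ℂ)) - (θ : ℂ)) ^ ((N : ℂ))⁻¹‖ + ‖γ‖ := by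
          have := norm_add_le ((θ : ℂ))
            (∏ j ∈ Finset.range N, (((X j ω : ℂ)) - (θ : ℂ)) ^ ((N : ℂ))⁻¹)
          linarith
      _ ≤ C + (∏ j ∈ Finset.range N, (W j ω) ^ ((1:ℝ) / (N:ℝ))) + ‖γ‖ := by
          have hn1 : ‖(θ : ℂ)‖ ≤ C := by
            rw [Complex.norm_real, Real.norm_eq_abs]; exact hθC
          have hn2 : ‖∏ j ∈ Finset.range N, (((X j ω : ℂ)) - (θ : ℂ)) ^ ((N : ℂ))⁻¹‖
              ≤ ∏ j ∈ Finset.range N, (W j ω) ^ ((1:ℝ) / (N:ℝ)) := by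
            rw [norm_prod]
            exact Finset.prod_le_prod (fun i _ => norm_nonneg _)
              fun i _ => hfac i
          have hn3 : ‖γ‖ = ‖γ‖ := rfl
          linarith
      _ = D + ∏ j ∈ Finset.range N, (W j ω) ^ ((1:ℝ) / (N:ℝ)) := by
          rw [hDdef]; ring
  have hYnonneg : ∀ N ω, 0 ≤ Y N ω := fun N ω => by
    rw [hY]; exact Real.iSup_nonneg fun θ => Real.iSup_nonneg fun _ => norm_nonneg _
  have hM0 : ∀ N ω, 0 ≤ D + ∏ j ∈ Finset.range N, (W j ω) ^ ((1:ℝ) / (N:ℝ)) := fun N ω =>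
    add_nonneg hD0 (Finset.prod_nonneg fun j _ => Real.rpow_nonneg (hW0 j ω) _)
  have hYle : ∀ N : ℕ, 0 < N → ∀ ω,
      Y N ω ≤ D + ∏ j ∈ Finset.range N, (W j ω) ^ ((1:ℝ) / (N:ℝ)) := by
    intro N hN ω
    rw [hY]
    exact Real.iSup_le (fun θ => Real.iSup_le (fun hθ => hbound N hN ω θ hθ) (hM0 N ω)) (hM0 N ω)
  -- continuity and measurability
  have hre : ∀ N : ℕ, 0 < N → 0 < (((N:ℂ))⁻¹).re := by
    intro N hN
    have h : ((N:ℂ))⁻¹ = (((((N:ℝ))⁻¹ : ℝ)) : ℂ) := by push_cast; ring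
    rw [h, Complex.ofReal_re]
    have : (0:ℝ) < (N:ℝ) := by exact_mod_cast hN
    positivity
  have hcontθ : ∀ N : ℕ, 0 < N → ∀ ω, Continuous fun θ : ℝ =>
      ‖((θ : ℂ)
        + (∏ j ∈ Finset.range N, (((X j ω : ℂ)) - (θ : ℂ)) ^ ((N : ℂ))⁻¹) - γ)‖ := by
    intro N hN ω
    apply continuous_norm.comp
    apply Continuous.sub _ continuous_const
    apply Continuous.add Complex.continuous_ofReal
    apply continuous_finset_prod
    intro j _
    have hrw : (fun θ : ℝ => ((X j ω : ℂ) - (θ:ℂ)) ^ ((N:ℂ))⁻¹)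
        = (fun t : ℝ => ((t : ℂ)) ^ ((N:ℂ))⁻¹) ∘ (fun θ : ℝ => X j ω - θ) := by
      funext θ; simp [Complex.ofReal_sub]
    rw [hrw]
    exact (Complex.continuous_ofReal_cpow_const (hre N hN)).comp
      (continuous_const.sub continuous_id)
  have hmeasP : ∀ N : ℕ, 0 < N → ∀ θ : ℝ, Measurable fun ω =>
      ‖((θ : ℂ)
        + (∏ j ∈ Finset.range N, (((X j ω : ℂ)) - (θ : ℂ)) ^ ((N : ℂ))⁻¹) - γ)‖ := by
    intro N hN θ
    apply continuous_norm.measurable.comp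
    apply Measurable.sub _ measurable_const
    apply Measurable.add measurable_const
    apply Finset.measurable_prod
    intro j _
    have hrw : (fun ω => ((X j ω : ℂ) - (θ:ℂ)) ^ ((N:ℂ))⁻¹)
        = (fun t : ℝ => ((t : ℂ)) ^ ((N:ℂ))⁻¹) ∘ (fun ω => X j ω - θ) := by
      funext ω; simp [Complex.ofReal_sub]
    rw [hrw]
    exact (Complex.continuous_ofReal_cpow_const (hre N hN)).measurable.comp
      ((hX j).sub measurable_const)
  have hYmeas : ∀ N : ℕ, 0 < N → Measurable (Y N) := by
    intro N hN
    rcases le_or_gt a b with hab | hab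
    · have hne : Nonempty (Set.Icc a b) := ⟨⟨a, le_refl a, hab⟩⟩
      obtain ⟨T, hTc, hTd⟩ := TopologicalSpace.exists_countable_dense (Set.Icc a b)
      set T' : Set ℝ := (↑) '' T with hT'def
      have hT'c : T'.Countable := hTc.image _
      have hT'sub : T' ⊆ Set.Icc a b := by rintro x ⟨t, _, rfl⟩; exact t.2
      have hT'd : Set.Icc a b ⊆ closure T' := Subtype.dense_iff.mp hTd
      have : Countable T' := hT'c.to_subtype
      have hclaim : Y N = fun ω => ⨆ t : T', ‖((((t : ℝ)) : ℂ)
          + (∏ j ∈ Finset.range N, (((X j ω : ℂ)) - (((t : ℝ)) : ℂ)) ^ ((N : ℂ))⁻¹) - γ)‖ := by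
        funext ω
        rw [hY]
        exact SGM.sup_dense_eq (hcontθ N hN ω)
          (fun θ => norm_nonneg _) (hM0 N ω)
          (fun θ hθ => hbound N hN ω θ hθ) T' hT'sub hT'd
      rw [hclaim]
      exact Measurable.iSup fun t => hmeasP N hN (t : ℝ)
    · have hz : Y N = fun _ => (0:ℝ) := by
        funext ω
        rw [hY]
        have h2 : ∀ θ : ℝ, (⨆ _ : θ ∈ Set.Icc a b, ‖((θ : ℂ)
            + (∏ j ∈ Finset.range N, (((X j ω : ℂ)) - (θ : ℂ)) ^ ((N : ℂ))⁻¹) - γ)‖) = 0 := by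
          intro θ
          rw [ciSup_neg, Real.sSup_empty]
          intro hθ
          exact absurd (le_trans hθ.1 hθ.2) (not_le.mpr hab)
        calc (⨆ θ : ℝ, ⨆ _ : θ ∈ Set.Icc a b, ‖((θ : ℂ)
              + (∏ j ∈ Finset.range N, (((X j ω : ℂ)) - (θ : ℂ)) ^ ((N : ℂ))⁻¹) - γ)‖)
            = ⨆ _ : ℝ, (0:ℝ) := iSup_congr h2
          _ = 0 := Real.iSup_const_zero
      rw [hz]; exact measurable_const
  -- integrability
  have hint : ∀ N, 2 ≤ N → Integrable (Y N) P := by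
    intro N hN
    have hN0 : 0 < N := by omega
    refine ⟨(hYmeas N hN0).aestronglyMeasurable, ?_⟩
    rw [hasFiniteIntegral_iff_ofReal (Filter.Eventually.of_forall (hYnonneg N))]
    calc ∫⁻ ω, ENNReal.ofReal (Y N ω) ∂P
        ≤ ∫⁻ ω, ENNReal.ofReal D
            + ENNReal.ofReal (∏ j ∈ Finset.range N, (W j ω) ^ ((1:ℝ) / (N:ℝ))) ∂P := by
          apply lintegral_mono
          intro ω
          calc ENNReal.ofReal (Y N ω)
              ≤ ENNReal.ofReal (D + ∏ j ∈ Finset.range N, (W j ω) ^ ((1:ℝ) / (N:ℝ))) :=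
                ENNReal.ofReal_le_ofReal (hYle N hN0 ω)
            _ = ENNReal.ofReal D
                + ENNReal.ofReal (∏ j ∈ Finset.range N, (W j ω) ^ ((1:ℝ) / (N:ℝ))) :=
                ENNReal.ofReal_add hD0
                  (Finset.prod_nonneg fun j _ => Real.rpow_nonneg (hW0 j ω) _)
      _ = ENNReal.ofReal D
          + ∫⁻ ω, ENNReal.ofReal (∏ j ∈ Finset.range N, (W j ω) ^ ((1:ℝ) / (N:ℝ))) ∂P := by
          rw [lintegral_add_left measurable_const, lintegral_const, measure_univ, mul_one]
      _ ≤ ENNReal.ofReal D + ENNReal.ofReal (Real.exp (3/2 * A)) :=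
          add_le_add_right (hkey N hN 1 one_pos (by norm_num)) _
      _ < ⊤ := by
          exact ENNReal.add_lt_top.mpr ⟨ENNReal.ofReal_lt_top, ENNReal.ofReal_lt_top⟩
  refine ⟨hint, ?_⟩
  intro ε hε
  set B1 : ℝ := (2:ℝ) ^ ((3:ℝ)/2) * (D ^ ((3:ℝ)/2) + Real.exp (3/2 * A)) with hB1def
  have hB10 : 0 ≤ B1 := by positivity
  refine ⟨max 1 ((B1/ε)^2), ?_⟩
  intro N hN
  set K : ℝ := max 1 ((B1/ε)^2) with hKdef
  have hK1 : (1:ℝ) ≤ K := le_max_left _ _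
  have hK0 : (0:ℝ) < K := lt_of_lt_of_le one_pos hK1
  have hN0 : 0 < N := by omega
  set k : ℝ := K ^ ((1:ℝ)/2) with hkdef
  have hkpos : 0 < k := Real.rpow_pos_of_pos hK0 _
  -- pointwise Y^{3/2} bound
  have hY32 : ∀ ω, (Y N ω) ^ ((3:ℝ)/2)
      ≤ (2:ℝ) ^ ((3:ℝ)/2) * (D ^ ((3:ℝ)/2)
        + ∏ j ∈ Finset.range N, (W j ω) ^ (((3:ℝ)/2) / (N:ℝ))) := by
    intro ω
    set G : ℝ := ∏ j ∈ Finset.range N, (W j ω) ^ ((1:ℝ) / (N:ℝ)) with hGdef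
    have hG0 : 0 ≤ G := Finset.prod_nonneg fun j _ => Real.rpow_nonneg (hW0 j ω) _
    have hG32 : G ^ ((3:ℝ)/2) = ∏ j ∈ Finset.range N, (W j ω) ^ (((3:ℝ)/2) / (N:ℝ)) := by
      rw [hGdef, ← Real.finset_prod_rpow _ _ (fun i _ => Real.rpow_nonneg (hW0 i ω) _) ((3:ℝ)/2)]
      apply Finset.prod_congr rfl
      intro j _
      rw [← Real.rpow_mul (hW0 j ω)]
      congr 1
      ring
    have h1 : Y N ω ≤ D + G := hYle N hN0 ω
    have h2 : (Y N ω) ^ ((3:ℝ)/2) ≤ (D + G) ^ ((3:ℝ)/2) :=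
      Real.rpow_le_rpow (hYnonneg N ω) h1 (by norm_num)
    have h3 : D + G ≤ 2 * max D G := by
      rcases le_total D G with h | h
      · rw [max_eq_right h]; linarith
      · rw [max_eq_left h]; linarith
    have hmax0 : 0 ≤ max D G := le_max_of_le_left hD0
    have h4 : (D + G) ^ ((3:ℝ)/2) ≤ (2 * max D G) ^ ((3:ℝ)/2) :=
      Real.rpow_le_rpow (by positivity) h3 (by norm_num)
    have h5 : (2 * max D G) ^ ((3:ℝ)/2) = (2:ℝ) ^ ((3:ℝ)/2) * (max D G) ^ ((3:ℝ)/2) :=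
      Real.mul_rpow (by norm_num) hmax0
    have h6 : (max D G) ^ ((3:ℝ)/2) ≤ D ^ ((3:ℝ)/2) + G ^ ((3:ℝ)/2) := by
      rcases le_total D G with h | h
      · rw [max_eq_right h]
        have : 0 ≤ D ^ ((3:ℝ)/2) := Real.rpow_nonneg hD0 _
        linarith
      · rw [max_eq_left h]
        have : 0 ≤ G ^ ((3:ℝ)/2) := Real.rpow_nonneg hG0 _
        linarith
    calc (Y N ω) ^ ((3:ℝ)/2) ≤ (2 * max D G) ^ ((3:ℝ)/2) := le_trans h2 h4
      _ = (2:ℝ) ^ ((3:ℝ)/2) * (max D G) ^ ((3:ℝ)/2) := h5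
      _ ≤ (2:ℝ) ^ ((3:ℝ)/2) * (D ^ ((3:ℝ)/2) + G ^ ((3:ℝ)/2)) :=
          mul_le_mul_of_nonneg_left h6 (by positivity)
      _ = (2:ℝ) ^ ((3:ℝ)/2) * (D ^ ((3:ℝ)/2)
            + ∏ j ∈ Finset.range N, (W j ω) ^ (((3:ℝ)/2) / (N:ℝ))) := by rw [hG32]
  have hint32 : ∫⁻ ω, ENNReal.ofReal ((Y N ω) ^ ((3:ℝ)/2)) ∂P ≤ ENNReal.ofReal B1 := by
    have hstep : ∀ ω, ENNReal.ofReal ((Y N ω) ^ ((3:ℝ)/2))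
        ≤ ENNReal.ofReal ((2:ℝ) ^ ((3:ℝ)/2)) * (ENNReal.ofReal (D ^ ((3:ℝ)/2))
          + ENNReal.ofReal (∏ j ∈ Finset.range N, (W j ω) ^ (((3:ℝ)/2) / (N:ℝ)))) := by
      intro ω
      have hprod0 : 0 ≤ ∏ j ∈ Finset.range N, (W j ω) ^ (((3:ℝ)/2) / (N:ℝ)) :=
        Finset.prod_nonneg fun j _ => Real.rpow_nonneg (hW0 j ω) _
      calc ENNReal.ofReal ((Y N ω) ^ ((3:ℝ)/2))
          ≤ ENNReal.ofReal ((2:ℝ) ^ ((3:ℝ)/2) * (D ^ ((3:ℝ)/2)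
            + ∏ j ∈ Finset.range N, (W j ω) ^ (((3:ℝ)/2) / (N:ℝ)))) :=
            ENNReal.ofReal_le_ofReal (hY32 ω)
        _ = ENNReal.ofReal ((2:ℝ) ^ ((3:ℝ)/2)) * (ENNReal.ofReal (D ^ ((3:ℝ)/2))
            + ENNReal.ofReal (∏ j ∈ Finset.range N, (W j ω) ^ (((3:ℝ)/2) / (N:ℝ)))) := by
            rw [ENNReal.ofReal_mul (by positivity),
              ENNReal.ofReal_add (Real.rpow_nonneg hD0 _) hprod0]
    calc ∫⁻ ω, ENNReal.ofReal ((Y N ω) ^ ((3:ℝ)/2)) ∂P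
        ≤ ∫⁻ ω, ENNReal.ofReal ((2:ℝ) ^ ((3:ℝ)/2)) * (ENNReal.ofReal (D ^ ((3:ℝ)/2))
            + ENNReal.ofReal (∏ j ∈ Finset.range N, (W j ω) ^ (((3:ℝ)/2) / (N:ℝ)))) ∂P :=
          lintegral_mono hstep
      _ = ENNReal.ofReal ((2:ℝ) ^ ((3:ℝ)/2)) * ∫⁻ ω, (ENNReal.ofReal (D ^ ((3:ℝ)/2))
            + ENNReal.ofReal (∏ j ∈ Finset.range N, (W j ω) ^ (((3:ℝ)/2) / (N:ℝ)))) ∂P :=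
          lintegral_const_mul' _ _ ENNReal.ofReal_ne_top
      _ = ENNReal.ofReal ((2:ℝ) ^ ((3:ℝ)/2)) * (ENNReal.ofReal (D ^ ((3:ℝ)/2))
            + ∫⁻ ω, ENNReal.ofReal (∏ j ∈ Finset.range N, (W j ω) ^ (((3:ℝ)/2) / (N:ℝ))) ∂P) := by
          rw [lintegral_add_left measurable_const, lintegral_const, measure_univ, mul_one]
      _ ≤ ENNReal.ofReal ((2:ℝ) ^ ((3:ℝ)/2)) * (ENNReal.ofReal (D ^ ((3:ℝ)/2))
            + ENNReal.ofReal (Real.exp (3/2 * A))) := by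
          apply mul_le_mul_right
          exact add_le_add_right (hkey N hN (3/2) (by norm_num) le_rfl) _
      _ = ENNReal.ofReal B1 := by
          rw [← ENNReal.ofReal_add (Real.rpow_nonneg hD0 _) (Real.exp_pos _).le,
            ← ENNReal.ofReal_mul (by positivity)]
  set s : Set Ω := {ω | K < Y N ω} with hsdef
  have hmeasY32 : Measurable fun ω => ENNReal.ofReal ((Y N ω) ^ ((3:ℝ)/2)) :=
    ((Real.continuous_rpow_const (by norm_num : (0:ℝ) ≤ 3/2)).measurable.comp
      (hYmeas N hN0)).ennreal_ofReal
  have heq : ∫ ω in s, Y N ω ∂P = (∫⁻ ω in s, ENNReal.ofReal (Y N ω) ∂P).toReal :=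
    integral_eq_lintegral_of_nonneg_ae (Filter.Eventually.of_forall fun ω => hYnonneg N ω)
      ((hYmeas N hN0).aestronglyMeasurable.restrict)
  have hptwise : ∀ ω ∈ s, ENNReal.ofReal (Y N ω)
      ≤ ENNReal.ofReal ((Y N ω) ^ ((3:ℝ)/2)) * ENNReal.ofReal k⁻¹ := by
    intro ω hω
    have hKY : K < Y N ω := hω
    have hYpos : 0 < Y N ω := lt_of_lt_of_le hK0 hKY.le
    have h32 : (Y N ω) ^ ((3:ℝ)/2) = Y N ω * (Y N ω) ^ ((1:ℝ)/2) := by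
      rw [show (3:ℝ)/2 = 1 + 1/2 by norm_num, Real.rpow_add hYpos, Real.rpow_one]
    have hyk : k ≤ (Y N ω) ^ ((1:ℝ)/2) :=
      Real.rpow_le_rpow hK0.le hKY.le (by norm_num)
    have hle : Y N ω ≤ (Y N ω) ^ ((3:ℝ)/2) * k⁻¹ := by
      rw [h32]
      have h1 : Y N ω * k ≤ Y N ω * (Y N ω) ^ ((1:ℝ)/2) :=
        mul_le_mul_of_nonneg_left hyk hYpos.le
      calc Y N ω = Y N ω * k * k⁻¹ := by field_simp
        _ ≤ Y N ω * (Y N ω) ^ ((1:ℝ)/2) * k⁻¹ :=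
          mul_le_mul_of_nonneg_right h1 (by positivity)
    calc ENNReal.ofReal (Y N ω) ≤ ENNReal.ofReal ((Y N ω) ^ ((3:ℝ)/2) * k⁻¹) :=
        ENNReal.ofReal_le_ofReal hle
      _ = ENNReal.ofReal ((Y N ω) ^ ((3:ℝ)/2)) * ENNReal.ofReal k⁻¹ :=
        ENNReal.ofReal_mul (Real.rpow_nonneg (hYnonneg N ω) _)
  have hchain : ∫⁻ ω in s, ENNReal.ofReal (Y N ω) ∂P
      ≤ ENNReal.ofReal B1 * ENNReal.ofReal k⁻¹ := by
    calc ∫⁻ ω in s, ENNReal.ofReal (Y N ω) ∂P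
        ≤ ∫⁻ ω in s, ENNReal.ofReal ((Y N ω) ^ ((3:ℝ)/2)) * ENNReal.ofReal k⁻¹ ∂P :=
          setLIntegral_mono (hmeasY32.mul_const _) hptwise
      _ = (∫⁻ ω in s, ENNReal.ofReal ((Y N ω) ^ ((3:ℝ)/2)) ∂P) * ENNReal.ofReal k⁻¹ :=
          lintegral_mul_const' _ _ ENNReal.ofReal_ne_top
      _ ≤ (∫⁻ ω, ENNReal.ofReal ((Y N ω) ^ ((3:ℝ)/2)) ∂P) * ENNReal.ofReal k⁻¹ :=
          mul_le_mul_left (setLIntegral_le_lintegral s _) _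
      _ ≤ ENNReal.ofReal B1 * ENNReal.ofReal k⁻¹ := mul_le_mul_left hint32 _
  rw [heq]
  have hfin : ENNReal.ofReal B1 * ENNReal.ofReal k⁻¹ ≠ ⊤ :=
    ENNReal.mul_ne_top ENNReal.ofReal_ne_top ENNReal.ofReal_ne_top
  calc (∫⁻ ω in s, ENNReal.ofReal (Y N ω) ∂P).toReal
      ≤ (ENNReal.ofReal B1 * ENNReal.ofReal k⁻¹).toReal := ENNReal.toReal_mono hfin hchain
    _ = B1 * k⁻¹ := by
        rw [← ENNReal.ofReal_mul hB10, ENNReal.toReal_ofReal (by positivity)]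
    _ ≤ ε := by
        have hk2 : B1 / ε ≤ k := by
          have h1 : (B1/ε)^2 ≤ K := le_max_right _ _
          have h2 : ((B1/ε)^2) ^ ((1:ℝ)/2) ≤ K ^ ((1:ℝ)/2) :=
            Real.rpow_le_rpow (by positivity) h1 (by norm_num)
          have h3 : ((B1/ε)^2) ^ ((1:ℝ)/2) = B1/ε := by
            rw [← Real.rpow_natCast (B1/ε) 2, ← Real.rpow_mul (by positivity)]
            norm_num
          rw [h3] at h2; exact h2
        have hB1e : B1 ≤ ε * k := by
          rw [div_le_iff₀ hε] at hk2
          linarith [hk2]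
        calc B1 * k⁻¹ ≤ (ε * k) * k⁻¹ := mul_le_mul_of_nonneg_right hB1e (by positivity)
          _ = ε := by field_simp
end
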